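/- arXiv:1901.05764 — 2 statements merged into one kernel-verified Lean document; each statement's English description precedes it below -/
import Mathlib

section
/- Under the censoring NA model, for any 0 < τ < τ_L, sup_{0 < t < τ} | F_{*n}(t) − F_*(t) | = O((n^{−1} ln n)^{1/2}) almost surely. -/
open MeasureTheory ProbabilityTheory Filter Set

noncomputable section

/-- A family of real random variables is *negatively associated* (NA) if for every pair of
disjoint finite index sets and every pair of coordinatewise nondecreasing (or coordinatewise
nonincreasing) functions for which the covariance exists, the covariance is nonpositive. -/
def NegAssoc {Ω : Type*} [MeasurableSpace Ω] (μ : Measure Ω) {ι : Type*} (Z : ι → Ω → ℝ) : Prop :=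
  ∀ B₁ B₂ : Finset ι, Disjoint B₁ B₂ →
    ∀ (f₁ : (↥B₁ → ℝ) → ℝ) (f₂ : (↥B₂ → ℝ) → ℝ),
      ((Monotone f₁ ∧ Monotone f₂) ∨ (Antitone f₁ ∧ Antitone f₂)) →
      Integrable (fun ω => f₁ fun i => Z i.1 ω) μ →
      Integrable (fun ω => f₂ fun j => Z j.1 ω) μ →
      Integrable (fun ω => (f₁ fun i => Z i.1 ω) * (f₂ fun j => Z j.1 ω)) μ →
      ∫ ω, (f₁ fun i => Z i.1 ω) * (f₂ fun j => Z j.1 ω) ∂μ ≤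
        (∫ ω, (f₁ fun i => Z i.1 ω) ∂μ) * ∫ ω, (f₂ fun j => Z j.1 ω) ∂μ

/-- The censoring NA model: `T` are nonnegative NA survival times with common continuous
distribution function, `Y` are nonnegative NA censoring times with common distribution
function, and the two sequences are independent of each other. -/
structure CensorModel (Ω : Type*) [MeasurableSpace Ω] (μ : Measure Ω) where
  T : ℕ → Ω → ℝ
  Y : ℕ → Ω → ℝ
  measT : ∀ i, Measurable (T i)
  measY : ∀ i, Measurable (Y i)
  nonnegT : ∀ i ω, 0 ≤ T i ω
  nonnegY : ∀ i ω, 0 ≤ Y i ω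
  naT : NegAssoc μ T
  naY : NegAssoc μ Y
  identT : ∀ i, Measure.map (T i) μ = Measure.map (T 0) μ
  identY : ∀ i, Measure.map (Y i) μ = Measure.map (Y 0) μ
  contF : Continuous fun t : ℝ => (μ {ω | T 0 ω ≤ t}).toReal
  indepTY : Indep (⨆ i, MeasurableSpace.comap (T i) inferInstance)
      (⨆ i, MeasurableSpace.comap (Y i) inferInstance) μ

namespace CensorModel

variable {Ω : Type*} [MeasurableSpace Ω] {μ : Measure Ω}

/-- Observed (censored) time `X_i = min (T_i, Y_i)`. -/
def X (M : CensorModel Ω μ) (i : ℕ) (ω : Ω) : ℝ := min (M.T i ω) (M.Y i ω)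

/-- Censoring indicator `δ_i = I(T_i ≤ Y_i)`. -/
def d (M : CensorModel Ω μ) (i : ℕ) (ω : Ω) : ℝ := if M.T i ω ≤ M.Y i ω then 1 else 0

/-- Distribution function `F` of the survival times. -/
def F (M : CensorModel Ω μ) (t : ℝ) : ℝ := (μ {ω | M.T 0 ω ≤ t}).toReal

/-- Distribution function `G` of the censoring times. -/
def G (M : CensorModel Ω μ) (t : ℝ) : ℝ := (μ {ω | M.Y 0 ω ≤ t}).toReal

/-- Distribution function `L` of the observed times. -/
def L (M : CensorModel Ω μ) (t : ℝ) : ℝ := (μ {ω | M.X 0 ω ≤ t}).toReal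

/-- Right endpoint `τ_L = sup {x : L x < 1}` of the support of `L`. -/
def tauL (M : CensorModel Ω μ) : ℝ := sSup {x | M.L x < 1}

/-- Left endpoint `a_F = inf {x : F x > 0}` of the support of `F`. -/
def aF (M : CensorModel Ω μ) : ℝ := sInf {x | 0 < M.F x}

/-- Sub-distribution function `F_*(t) = P(X_1 ≤ t, δ_1 = 1)`. -/
def Fstar (M : CensorModel Ω μ) (t : ℝ) : ℝ :=
  (μ {ω | M.X 0 ω ≤ t ∧ M.T 0 ω ≤ M.Y 0 ω}).toReal

/-- The Lebesgue–Stieltjes measure `dF_*` of the sub-distribution `F_*`. -/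
def mustar (M : CensorModel Ω μ) : Measure ℝ :=
  Measure.map (M.X 0) (μ.restrict {ω | M.T 0 ω ≤ M.Y 0 ω})

/-- Empirical sub-distribution function `F_{*n}`. -/
def Fstarn (M : CensorModel Ω μ) (n : ℕ) (t : ℝ) (ω : Ω) : ℝ :=
  (n : ℝ)⁻¹ * ∑ k ∈ Finset.range n, if M.X k ω ≤ t ∧ M.T k ω ≤ M.Y k ω then (1 : ℝ) else 0

/-- Empirical distribution function `L_n(t) = n⁻¹ Σ_k I(X_k < t)`. -/
def Ln (M : CensorModel Ω μ) (n : ℕ) (t : ℝ) (ω : Ω) : ℝ :=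
  (n : ℝ)⁻¹ * ∑ k ∈ Finset.range n, if M.X k ω < t then (1 : ℝ) else 0

/-- Cumulative hazard function `H(x) = ∫_0^x dF_*(s) / L̄(s)`. -/
def H (M : CensorModel Ω μ) (x : ℝ) : ℝ := ∫ s in Set.Ioc 0 x, (1 - M.L s)⁻¹ ∂M.mustar

/-- `η(x, t, δ) = ∫_0^{x∧t} dF_*(s)/L̄(s)² − I(x ≤ t, δ = 1)/L̄(x)`. -/
def eta (M : CensorModel Ω μ) (x t δ : ℝ) : ℝ :=
  (∫ s in Set.Ioc 0 (min x t), ((1 - M.L s) ^ 2)⁻¹ ∂M.mustar) -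
    (if x ≤ t ∧ δ = 1 then (1 : ℝ) else 0) / (1 - M.L x)

/-- Sorting permutation producing the order statistics of `X_1, …, X_n`. -/
def sortIdx (M : CensorModel Ω μ) (n : ℕ) (ω : Ω) : Fin n → Fin n :=
  ⇑(Tuple.sort fun i : Fin n => M.X i.val ω)

/-- Order statistic `X_(k)` (with `k` zero-based). -/
def Xord (M : CensorModel Ω μ) (n : ℕ) (k : Fin n) (ω : Ω) : ℝ := M.X (M.sortIdx n ω k).val ω

/-- Concomitant `δ_(k)` of the order statistic `X_(k)` (with `k` zero-based). -/
def dord (M : CensorModel Ω μ) (n : ℕ) (k : Fin n) (ω : Ω) : ℝ := M.d (M.sortIdx n ω k).val ω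

/-- Kaplan–Meier estimator: `F̂_n(x) = 1 - ∏_{k : X_(k) ≤ x} (1 - δ_(k)/(n-k+1))`
(here `k` is zero-based, so `n - k + 1` becomes `n - k`). -/
def KM (M : CensorModel Ω μ) (n : ℕ) (x : ℝ) (ω : Ω) : ℝ :=
  1 - ∏ k : Fin n,
    if M.Xord n k ω ≤ x then 1 - M.dord n k ω / ((n : ℝ) - (k.val : ℝ)) else 1

/-- Cumulative hazard estimator `Ĥ_n(x) = Σ_{k : X_(k) ≤ x} δ_(k)/(n-k+1)`. -/
def Hn (M : CensorModel Ω μ) (n : ℕ) (x : ℝ) (ω : Ω) : ℝ :=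
  ∑ k : Fin n,
    if M.Xord n k ω ≤ x then M.dord n k ω / ((n : ℝ) - (k.val : ℝ)) else 0

end CensorModel


section Aux

open Real

variable {Ω : Type*} [MeasurableSpace Ω] {μ : Measure Ω} [IsProbabilityMeasure μ]

lemma ind_mono {P Q : Prop} [Decidable P] [Decidable Q] (h : P → Q) :
    (if P then (1:ℝ) else 0) ≤ (if Q then (1:ℝ) else 0) := by
  split_ifs with h1 h2 h2 <;> simp_all

lemma ind_nonneg {P : Prop} [Decidable P] : (0:ℝ) ≤ if P then (1:ℝ) else 0 := by
  split_ifs <;> norm_num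

lemma ind_le_one {P : Prop} [Decidable P] : (if P then (1:ℝ) else 0) ≤ 1 := by
  split_ifs <;> norm_num

lemma integrable_of_bound {α : Type*} [MeasurableSpace α] (ν : Measure α) [IsFiniteMeasure ν]
    {f : α → ℝ} (hm : AEStronglyMeasurable f ν) (C : ℝ) (h : ∀ x, |f x| ≤ C) :
    Integrable f ν :=
  Integrable.mono' (integrable_const C) hm (ae_of_all _ fun x => h x)

namespace CensorModel

variable (M : CensorModel Ω μ)

/-- The key indicator variable `ζ_k(t) = I(T_k ≤ t, T_k ≤ Y_k)`. -/
def zeta (t : ℝ) (k : ℕ) (ω : Ω) : ℝ := if M.T k ω ≤ t ∧ M.T k ω ≤ M.Y k ω then 1 else 0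

lemma zetaSet_measurable (t : ℝ) (k : ℕ) :
    MeasurableSet {ω | M.T k ω ≤ t ∧ M.T k ω ≤ M.Y k ω} := by
  have h1 : MeasurableSet {ω | M.T k ω ≤ t} := measurableSet_le (M.measT k) measurable_const
  have h2 : MeasurableSet {ω | M.T k ω ≤ M.Y k ω} := measurableSet_le (M.measT k) (M.measY k)
  exact (h1.inter h2 : _)

lemma zeta_measurable (t : ℝ) (k : ℕ) : Measurable (M.zeta t k) :=
  Measurable.ite (M.zetaSet_measurable t k) measurable_const measurable_const

lemma zeta_nonneg (t : ℝ) (k : ℕ) (ω : Ω) : 0 ≤ M.zeta t k ω := ind_nonneg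

lemma zeta_le_one (t : ℝ) (k : ℕ) (ω : Ω) : M.zeta t k ω ≤ 1 := ind_le_one

lemma map_pair_eq (k : ℕ) :
    Measure.map (fun ω => (M.T k ω, M.Y k ω)) μ
      = Measure.map (fun ω => (M.T 0 ω, M.Y 0 ω)) μ := by
  have hind : ∀ j : ℕ, IndepFun (M.T j) (M.Y j) μ := by
    intro j
    rw [IndepFun_iff_Indep]
    refine indep_of_indep_of_le_left (indep_of_indep_of_le_right M.indepTY ?_) ?_
    · exact le_iSup (fun i => MeasurableSpace.comap (M.Y i) inferInstance) j
    · exact le_iSup (fun i => MeasurableSpace.comap (M.T i) inferInstance) j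
  have h1 := (indepFun_iff_map_prod_eq_prod_map_map (M.measT k).aemeasurable
      (M.measY k).aemeasurable).mp (hind k)
  have h2 := (indepFun_iff_map_prod_eq_prod_map_map (M.measT 0).aemeasurable
      (M.measY 0).aemeasurable).mp (hind 0)
  rw [h1, h2, M.identT k, M.identY k]

lemma zeta_mean (t : ℝ) (k : ℕ) : ∫ ω, M.zeta t k ω ∂μ = M.Fstar t := by
  have hS : MeasurableSet {p : ℝ × ℝ | p.1 ≤ t ∧ p.1 ≤ p.2} := by
    exact (measurableSet_le measurable_fst measurable_const).inter
      (measurableSet_le measurable_fst measurable_snd)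
  have hmeas : ∀ j : ℕ, μ {ω | M.T j ω ≤ t ∧ M.T j ω ≤ M.Y j ω}
      = Measure.map (fun ω => (M.T j ω, M.Y j ω)) μ {p : ℝ × ℝ | p.1 ≤ t ∧ p.1 ≤ p.2} := by
    intro j
    rw [Measure.map_apply ((M.measT j).prodMk (M.measY j)) hS]
    rfl
  have hset : {ω | M.X 0 ω ≤ t ∧ M.T 0 ω ≤ M.Y 0 ω}
      = {ω | M.T 0 ω ≤ t ∧ M.T 0 ω ≤ M.Y 0 ω} := by
    ext ω
    simp only [Set.mem_setOf_eq, X]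
    constructor
    · rintro ⟨h1, h2⟩; exact ⟨by rwa [min_eq_left h2] at h1, h2⟩
    · rintro ⟨h1, h2⟩; exact ⟨by rwa [min_eq_left h2], h2⟩
  have : ∫ ω, M.zeta t k ω ∂μ
      = (μ {ω | M.T k ω ≤ t ∧ M.T k ω ≤ M.Y k ω}).toReal := by
    have : M.zeta t k = Set.indicator {ω | M.T k ω ≤ t ∧ M.T k ω ≤ M.Y k ω} (fun _ => (1:ℝ)) := by
      funext ω
      simp [zeta, Set.indicator_apply, Set.mem_setOf_eq]
    rw [this, integral_indicator_const (1:ℝ) (M.zetaSet_measurable t k)]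
    simp
    rfl
  rw [this, Fstar, hset, hmeas k, hmeas 0, M.map_pair_eq k]

lemma Fstar_nonneg (t : ℝ) : 0 ≤ M.Fstar t := ENNReal.toReal_nonneg

lemma Fstar_le_one (t : ℝ) : M.Fstar t ≤ 1 := by
  rw [Fstar]
  have h := measure_mono (Set.subset_univ {ω | M.X 0 ω ≤ t ∧ M.T 0 ω ≤ M.Y 0 ω}) (μ := μ)
  calc (μ _).toReal ≤ (μ Set.univ).toReal :=
        ENNReal.toReal_mono (measure_ne_top μ _) h
    _ = 1 := by simp

lemma Fstar_mono : Monotone M.Fstar := by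
  intro s u hsu
  refine ENNReal.toReal_mono (measure_ne_top μ _) (measure_mono ?_)
  rintro ω ⟨h1, h2⟩
  exact ⟨le_trans h1 hsu, h2⟩

end CensorModel

end Aux

section Aux2

set_option linter.unusedSectionVars false

open Real

variable {Ω : Type*} [MeasurableSpace Ω] {μ : Measure Ω} [IsProbabilityMeasure μ]

namespace CensorModel

variable (M : CensorModel Ω μ)

lemma Fstar_sub_le {s u : ℝ} (hsu : s ≤ u) : M.Fstar u - M.Fstar s ≤ M.F u - M.F s := by
  have hsub : {ω | M.X 0 ω ≤ u ∧ M.T 0 ω ≤ M.Y 0 ω} ⊆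
      {ω | M.X 0 ω ≤ s ∧ M.T 0 ω ≤ M.Y 0 ω} ∪ ({ω | M.T 0 ω ≤ u} \ {ω | M.T 0 ω ≤ s}) := by
    rintro ω ⟨h1, h2⟩
    rw [X, min_eq_left h2] at h1
    by_cases hs : M.T 0 ω ≤ s
    · left; exact ⟨by rw [X, min_eq_left h2]; exact hs, h2⟩
    · right; exact ⟨h1, hs⟩
  have hμ : μ {ω | M.X 0 ω ≤ u ∧ M.T 0 ω ≤ M.Y 0 ω} ≤
      μ {ω | M.X 0 ω ≤ s ∧ M.T 0 ω ≤ M.Y 0 ω} + μ ({ω | M.T 0 ω ≤ u} \ {ω | M.T 0 ω ≤ s}) :=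
    le_trans (measure_mono hsub) (measure_union_le _ _)
  have hdiff : (μ ({ω | M.T 0 ω ≤ u} \ {ω | M.T 0 ω ≤ s})).toReal = M.F u - M.F s := by
    have hss : {ω | M.T 0 ω ≤ s} ⊆ {ω | M.T 0 ω ≤ u} := fun ω h => le_trans h hsu
    rw [measure_diff hss (measurableSet_le (M.measT 0) measurable_const).nullMeasurableSet
      (measure_ne_top μ _)]
    rw [ENNReal.toReal_sub_of_le (measure_mono hss) (measure_ne_top μ _)]
    rfl
  have := ENNReal.toReal_mono (by finiteness) hμ
  rw [ENNReal.toReal_add (measure_ne_top μ _) (measure_ne_top μ _), hdiff] at this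
  have h1 : (μ {ω | M.X 0 ω ≤ u ∧ M.T 0 ω ≤ M.Y 0 ω}).toReal = M.Fstar u := rfl
  have h2 : (μ {ω | M.X 0 ω ≤ s ∧ M.T 0 ω ≤ M.Y 0 ω}).toReal = M.Fstar s := rfl
  rw [h1, h2] at this
  linarith

lemma F_mono : Monotone M.F := by
  intro s u hsu
  exact ENNReal.toReal_mono (measure_ne_top μ _) (measure_mono (fun ω h => le_trans h hsu))

lemma Fstar_continuous : Continuous M.Fstar := by
  rw [continuous_iff_continuousAt]
  intro x
  have hbound : ∀ u : ℝ, ‖M.Fstar u - M.Fstar x‖ ≤ |M.F u - M.F x| := by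
    intro u
    rcases le_total u x with h | h
    · have h1 := M.Fstar_sub_le h
      have h2 := M.Fstar_mono h
      have h3 := M.F_mono h
      rw [Real.norm_eq_abs, abs_sub_comm, abs_of_nonneg (by linarith), abs_sub_comm,
        abs_of_nonneg (by linarith)]
      linarith
    · have h1 := M.Fstar_sub_le h
      have h2 := M.Fstar_mono h
      have h3 := M.F_mono h
      rw [Real.norm_eq_abs, abs_of_nonneg (by linarith), abs_of_nonneg (by linarith)]
      linarith
  have hF : Tendsto (fun u => |M.F u - M.F x|) (nhds x) (nhds 0) := by
    have hc : Continuous M.F := M.contF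
    have := ((hc.tendsto x).sub_const (M.F x)).abs
    simpa using this
  have : Tendsto (fun u => M.Fstar u - M.Fstar x) (nhds x) (nhds 0) :=
    squeeze_zero_norm hbound hF
  rw [ContinuousAt]
  simpa using this.add_const (M.Fstar x)

lemma Fstarn_eq (n : ℕ) (t : ℝ) (ω : Ω) :
    M.Fstarn n t ω = (n : ℝ)⁻¹ * ∑ k ∈ Finset.range n, M.zeta t k ω := by
  rw [Fstarn]
  congr 1
  refine Finset.sum_congr rfl fun k _ => ?_
  rw [zeta]
  refine if_congr ?_ rfl rfl
  constructor
  · rintro ⟨h1, h2⟩; rw [X, min_eq_left h2] at h1; exact ⟨h1, h2⟩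
  · rintro ⟨h1, h2⟩; exact ⟨by rw [X, min_eq_left h2]; exact h1, h2⟩

lemma Fstarn_mono (n : ℕ) (ω : Ω) : Monotone (fun t => M.Fstarn n t ω) := by
  intro s u hsu
  simp only [Fstarn]
  refine mul_le_mul_of_nonneg_left ?_ (by positivity)
  refine Finset.sum_le_sum fun k _ => ind_mono ?_
  rintro ⟨h1, h2⟩; exact ⟨le_trans h1 hsu, h2⟩

lemma Fstarn_measurable (n : ℕ) (t : ℝ) : Measurable (fun ω => M.Fstarn n t ω) := by
  simp only [Fstarn_eq]
  exact (Finset.measurable_sum _ fun k _ => M.zeta_measurable t k).const_mul _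

end CensorModel

end Aux2

section Aux3

set_option linter.unusedSectionVars false
set_option maxHeartbeats 1000000

open Real

variable {Ω : Type*} [MeasurableSpace Ω] {μ : Measure Ω} [IsProbabilityMeasure μ]

/-- Generic bound for `exp` of a scaled sum of `[0,1]`-valued terms. -/
lemma exp_mul_sum_ind_le {ι : Type*} (s : Finset ι) (l : ℝ) (g : ι → ℝ)
    (hg0 : ∀ i ∈ s, 0 ≤ g i) (hg1 : ∀ i ∈ s, g i ≤ 1) :
    Real.exp (l * ∑ i ∈ s, g i) ≤ Real.exp (|l| * s.card) := by
  apply Real.exp_le_exp.mpr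
  have hsum0 : 0 ≤ ∑ i ∈ s, g i := Finset.sum_nonneg hg0
  have hsum1 : ∑ i ∈ s, g i ≤ s.card := by
    calc ∑ i ∈ s, g i ≤ ∑ _i ∈ s, (1:ℝ) := Finset.sum_le_sum hg1
      _ = s.card := by simp
  calc l * ∑ i ∈ s, g i ≤ |l * ∑ i ∈ s, g i| := le_abs_self _
    _ = |l| * (∑ i ∈ s, g i) := by rw [abs_mul, abs_of_nonneg hsum0]
    _ ≤ |l| * s.card := by apply mul_le_mul_of_nonneg_left hsum1 (abs_nonneg l)

/-- The function on the product of path spaces corresponding to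
`exp (l * ∑_{i ∈ A} ζ_i(t))`. -/
def PhiNA (t l : ℝ) (A : Finset ℕ) (p : (ℕ → ℝ) × (ℕ → ℝ)) : ℝ :=
  Real.exp (l * ∑ i ∈ A, if p.1 i ≤ t ∧ p.1 i ≤ p.2 i then (1:ℝ) else 0)

lemma PhiNA_measurable (t l : ℝ) (A : Finset ℕ) : Measurable (PhiNA t l A) := by
  apply Real.measurable_exp.comp
  apply Measurable.const_mul
  apply Finset.measurable_sum
  intro i _
  have h1 : MeasurableSet {p : (ℕ → ℝ) × (ℕ → ℝ) | p.1 i ≤ t ∧ p.1 i ≤ p.2 i} :=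
    (measurableSet_le ((measurable_pi_apply i).comp measurable_fst) measurable_const).inter
      (measurableSet_le ((measurable_pi_apply i).comp measurable_fst)
        ((measurable_pi_apply i).comp measurable_snd))
  exact Measurable.ite h1 measurable_const measurable_const

lemma PhiNA_pos (t l : ℝ) (A : Finset ℕ) (p : (ℕ → ℝ) × (ℕ → ℝ)) : 0 < PhiNA t l A p :=
  Real.exp_pos _

lemma PhiNA_le (t l : ℝ) (A : Finset ℕ) (p : (ℕ → ℝ) × (ℕ → ℝ)) :
    PhiNA t l A p ≤ Real.exp (|l| * A.card) :=
  exp_mul_sum_ind_le A l _ (fun i _ => ind_nonneg) (fun i _ => ind_le_one)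

lemma PhiNA_abs_le (t l : ℝ) (A : Finset ℕ) (p : (ℕ → ℝ) × (ℕ → ℝ)) :
    |PhiNA t l A p| ≤ Real.exp (|l| * A.card) := by
  rw [abs_of_pos (PhiNA_pos t l A p)]; exact PhiNA_le t l A p

namespace CensorModel

variable (M : CensorModel Ω μ)

lemma negassoc_exp_split (t l : ℝ) {A B : Finset ℕ} (hAB : Disjoint A B) :
    ∫ ω, Real.exp (l * ∑ i ∈ A, M.zeta t i ω) * Real.exp (l * ∑ i ∈ B, M.zeta t i ω) ∂μ ≤
      (∫ ω, Real.exp (l * ∑ i ∈ A, M.zeta t i ω) ∂μ) *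
        ∫ ω, Real.exp (l * ∑ i ∈ B, M.zeta t i ω) ∂μ := by
  classical
  set Tv : Ω → (ℕ → ℝ) := fun ω i => M.T i ω with hTvdef
  set Yv : Ω → (ℕ → ℝ) := fun ω i => M.Y i ω with hYvdef
  have hTv : Measurable Tv := measurable_pi_lambda _ (fun i => M.measT i)
  have hYv : Measurable Yv := measurable_pi_lambda _ (fun i => M.measY i)
  set νT : Measure (ℕ → ℝ) := Measure.map Tv μ with hνT
  set νY : Measure (ℕ → ℝ) := Measure.map Yv μ with hνY
  haveI : IsProbabilityMeasure νT := Measure.isProbabilityMeasure_map hTv.aemeasurable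
  haveI : IsProbabilityMeasure νY := Measure.isProbabilityMeasure_map hYv.aemeasurable
  -- the comap σ-algebras
  have hcomapT : MeasurableSpace.comap Tv MeasurableSpace.pi
      = ⨆ i, MeasurableSpace.comap (M.T i) inferInstance := by
    rw [show (MeasurableSpace.pi : MeasurableSpace (ℕ → ℝ))
        = ⨆ i, MeasurableSpace.comap (fun b : ℕ → ℝ => b i) inferInstance from rfl,
      MeasurableSpace.comap_iSup]
    exact iSup_congr fun i => by rw [MeasurableSpace.comap_comp]; rfl
  have hcomapY : MeasurableSpace.comap Yv MeasurableSpace.pi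
      = ⨆ i, MeasurableSpace.comap (M.Y i) inferInstance := by
    rw [show (MeasurableSpace.pi : MeasurableSpace (ℕ → ℝ))
        = ⨆ i, MeasurableSpace.comap (fun b : ℕ → ℝ => b i) inferInstance from rfl,
      MeasurableSpace.comap_iSup]
    exact iSup_congr fun i => by rw [MeasurableSpace.comap_comp]; rfl
  have hIndep : IndepFun Tv Yv μ := by
    rw [IndepFun_iff_Indep, hcomapT, hcomapY]
    exact M.indepTY
  have hmap : Measure.map (fun ω => (Tv ω, Yv ω)) μ = νT.prod νY :=
    (indepFun_iff_map_prod_eq_prod_map_map hTv.aemeasurable hYv.aemeasurable).mp hIndep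
  -- conversion between μ-integrals and product-measure integrals
  have hconv : ∀ g : (ℕ → ℝ) × (ℕ → ℝ) → ℝ, Measurable g →
      ∫ ω, g (Tv ω, Yv ω) ∂μ = ∫ p, g p ∂(νT.prod νY) := by
    intro g hg
    rw [← hmap, integral_map (hTv.prodMk hYv).aemeasurable hg.aestronglyMeasurable]
  -- integrability of PhiNA-type functions on the product space
  have hint_prod : ∀ (C : Finset ℕ), Integrable (PhiNA t l C) (νT.prod νY) := fun C =>
    integrable_of_bound _ (PhiNA_measurable t l C).aestronglyMeasurable _ (PhiNA_abs_le t l C)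
  have hmul_meas : Measurable (fun p => PhiNA t l A p * PhiNA t l B p) :=
    (PhiNA_measurable t l A).mul (PhiNA_measurable t l B)
  have hmul_bound : ∀ p, |PhiNA t l A p * PhiNA t l B p|
      ≤ Real.exp (|l| * A.card) * Real.exp (|l| * B.card) := by
    intro p
    rw [abs_mul]
    exact mul_le_mul (PhiNA_abs_le t l A p) (PhiNA_abs_le t l B p) (abs_nonneg _)
      (Real.exp_pos _).le
  have hint_mul : Integrable (fun p => PhiNA t l A p * PhiNA t l B p) (νT.prod νY) :=
    integrable_of_bound _ hmul_meas.aestronglyMeasurable _ hmul_bound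
  -- inner inequality : for each fixed `b`, use NA of the `T` family
  have inner : ∀ b : ℕ → ℝ,
      ∫ a, PhiNA t l A (a, b) * PhiNA t l B (a, b) ∂νT ≤
        (∫ a, PhiNA t l A (a, b) ∂νT) * ∫ a, PhiNA t l B (a, b) ∂νT := by
    intro b
    set fA : (↥A → ℝ) → ℝ := fun x =>
      Real.exp (l * ∑ i : ↥A, if x i ≤ t ∧ x i ≤ b i.1 then (1:ℝ) else 0) with hfA
    set fB : (↥B → ℝ) → ℝ := fun x =>
      Real.exp (l * ∑ i : ↥B, if x i ≤ t ∧ x i ≤ b i.1 then (1:ℝ) else 0) with hfB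
    have hcompA : ∀ a : ℕ → ℝ, fA (fun i : ↥A => a i.1) = PhiNA t l A (a, b) := by
      intro a
      simp only [hfA, PhiNA]
      congr 1
      congr 1
      exact Finset.sum_coe_sort A (fun j => if a j ≤ t ∧ a j ≤ b j then (1:ℝ) else 0)
    have hcompB : ∀ a : ℕ → ℝ, fB (fun i : ↥B => a i.1) = PhiNA t l B (a, b) := by
      intro a
      simp only [hfB, PhiNA]
      congr 1
      congr 1
      exact Finset.sum_coe_sort B (fun j => if a j ≤ t ∧ a j ≤ b j then (1:ℝ) else 0)
    -- monotonicity
    have hmono : ∀ (C : Finset ℕ), (0 ≤ l →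
        Antitone (fun x : ↥C → ℝ =>
          Real.exp (l * ∑ i : ↥C, if x i ≤ t ∧ x i ≤ b i.1 then (1:ℝ) else 0)))
        ∧ (l ≤ 0 → Monotone (fun x : ↥C → ℝ =>
          Real.exp (l * ∑ i : ↥C, if x i ≤ t ∧ x i ≤ b i.1 then (1:ℝ) else 0))) := by
      intro C
      have hsum : Antitone (fun x : ↥C → ℝ =>
          ∑ i : ↥C, if x i ≤ t ∧ x i ≤ b i.1 then (1:ℝ) else 0) := by
        intro x y hxy
        refine Finset.sum_le_sum fun i _ => ind_mono ?_
        rintro ⟨h1, h2⟩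
        exact ⟨le_trans (hxy i) h1, le_trans (hxy i) h2⟩
      constructor
      · intro hl x y hxy
        exact Real.exp_le_exp.mpr (mul_le_mul_of_nonneg_left (hsum hxy) hl)
      · intro hl x y hxy
        exact Real.exp_le_exp.mpr (mul_le_mul_of_nonpos_left (hsum hxy) hl)
    -- integrability over μ
    have hmeasA : Measurable (fun ω => PhiNA t l A (Tv ω, b)) :=
      (PhiNA_measurable t l A).comp (hTv.prodMk measurable_const)
    have hmeasB : Measurable (fun ω => PhiNA t l B (Tv ω, b)) :=
      (PhiNA_measurable t l B).comp (hTv.prodMk measurable_const)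
    have heqA : (fun ω => fA (fun i : ↥A => M.T i.1 ω)) = fun ω => PhiNA t l A (Tv ω, b) :=
      funext fun ω => hcompA (Tv ω)
    have heqB : (fun ω => fB (fun i : ↥B => M.T i.1 ω)) = fun ω => PhiNA t l B (Tv ω, b) :=
      funext fun ω => hcompB (Tv ω)
    have hintA : Integrable (fun ω => fA (fun i : ↥A => M.T i.1 ω)) μ := by
      rw [heqA]
      exact integrable_of_bound _ hmeasA.aestronglyMeasurable _
        (fun ω => PhiNA_abs_le t l A _)
    have hintB : Integrable (fun ω => fB (fun i : ↥B => M.T i.1 ω)) μ := by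
      rw [heqB]
      exact integrable_of_bound _ hmeasB.aestronglyMeasurable _
        (fun ω => PhiNA_abs_le t l B _)
    have hintAB : Integrable
        (fun ω => (fA (fun i : ↥A => M.T i.1 ω)) * (fB (fun i : ↥B => M.T i.1 ω))) μ := by
      have : (fun ω => (fA (fun i : ↥A => M.T i.1 ω)) * (fB (fun i : ↥B => M.T i.1 ω)))
          = fun ω => PhiNA t l A (Tv ω, b) * PhiNA t l B (Tv ω, b) := by
        funext ω; rw [hcompA (Tv ω), hcompB (Tv ω)]
      rw [this]
      exact integrable_of_bound _ (hmeasA.mul hmeasB).aestronglyMeasurable _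
        (fun ω => hmul_bound (Tv ω, b))
    have hNA := M.naT A B hAB fA fB
      (by
        rcases le_total 0 l with hl | hl
        · exact Or.inr ⟨(hmono A).1 hl, (hmono B).1 hl⟩
        · exact Or.inl ⟨(hmono A).2 hl, (hmono B).2 hl⟩)
      hintA hintB hintAB
    -- convert the νT-integrals to μ-integrals
    have hmA : Measurable (fun a : ℕ → ℝ => PhiNA t l A (a, b)) :=
      (PhiNA_measurable t l A).comp (measurable_id.prodMk measurable_const)
    have hmB : Measurable (fun a : ℕ → ℝ => PhiNA t l B (a, b)) :=
      (PhiNA_measurable t l B).comp (measurable_id.prodMk measurable_const)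
    have e1 : ∫ a, PhiNA t l A (a, b) ∂νT = ∫ ω, fA (fun i : ↥A => M.T i.1 ω) ∂μ := by
      rw [hνT, integral_map hTv.aemeasurable hmA.aestronglyMeasurable, heqA]
    have e2 : ∫ a, PhiNA t l B (a, b) ∂νT = ∫ ω, fB (fun i : ↥B => M.T i.1 ω) ∂μ := by
      rw [hνT, integral_map hTv.aemeasurable hmB.aestronglyMeasurable, heqB]
    have e3 : ∫ a, PhiNA t l A (a, b) * PhiNA t l B (a, b) ∂νT
        = ∫ ω, (fA (fun i : ↥A => M.T i.1 ω)) * (fB (fun i : ↥B => M.T i.1 ω)) ∂μ := by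
      rw [hνT, integral_map hTv.aemeasurable (f := fun a => PhiNA t l A (a, b) * PhiNA t l B (a, b)) (hmA.mul hmB).aestronglyMeasurable]
      congr 1
      funext ω
      rw [hcompA (Tv ω), hcompB (Tv ω)]
    rw [e1, e2, e3]
    exact hNA
  -- averaged functions of the censoring variables
  set gA : (ℕ → ℝ) → ℝ := fun b => ∫ a, PhiNA t l A (a, b) ∂νT with hgA
  set gB : (ℕ → ℝ) → ℝ := fun b => ∫ a, PhiNA t l B (a, b) ∂νT with hgB
  have hgA_meas : StronglyMeasurable gA :=
    (PhiNA_measurable t l A).stronglyMeasurable.integral_prod_left'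
  have hgB_meas : StronglyMeasurable gB :=
    (PhiNA_measurable t l B).stronglyMeasurable.integral_prod_left'
  have hg_bound : ∀ (C : Finset ℕ) (b : ℕ → ℝ),
      |∫ a, PhiNA t l C (a, b) ∂νT| ≤ Real.exp (|l| * C.card) := by
    intro C b
    have := norm_integral_le_of_norm_le_const (μ := νT)
      (f := fun a => PhiNA t l C (a, b)) (C := Real.exp (|l| * C.card))
      (ae_of_all _ fun a => by
        rw [Real.norm_eq_abs]; exact PhiNA_abs_le t l C (a, b))
    simpa using this
  have hgmul_bound : ∀ b : ℕ → ℝ,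
      |gA b * gB b| ≤ Real.exp (|l| * A.card) * Real.exp (|l| * B.card) := by
    intro b
    rw [abs_mul]
    exact mul_le_mul (hg_bound A b) (hg_bound B b) (abs_nonneg _) (Real.exp_pos _).le
  -- subtype versions of `gA`, `gB` for the NA hypothesis on `Y`
  set fA' : (↥A → ℝ) → ℝ := fun y =>
    ∫ a, Real.exp (l * ∑ i : ↥A, if a i.1 ≤ t ∧ a i.1 ≤ y i then (1:ℝ) else 0) ∂νT with hfA'
  set fB' : (↥B → ℝ) → ℝ := fun y =>
    ∫ a, Real.exp (l * ∑ i : ↥B, if a i.1 ≤ t ∧ a i.1 ≤ y i then (1:ℝ) else 0) ∂νT with hfB'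
  have hcompA' : ∀ yf : ℕ → ℝ, fA' (fun i : ↥A => yf i.1) = gA yf := by
    intro yf
    simp only [hfA', hgA]
    congr 1
    funext a
    congr 2
    exact Finset.sum_coe_sort A (fun j => if a j ≤ t ∧ a j ≤ yf j then (1:ℝ) else 0)
  have hcompB' : ∀ yf : ℕ → ℝ, fB' (fun i : ↥B => yf i.1) = gB yf := by
    intro yf
    simp only [hfB', hgB]
    congr 1
    funext a
    congr 2
    exact Finset.sum_coe_sort B (fun j => if a j ≤ t ∧ a j ≤ yf j then (1:ℝ) else 0)
  -- integrability of the inner integrands in `a` for fixed subtype vector `y`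
  have hinner_meas : ∀ (C : Finset ℕ) (y : ↥C → ℝ),
      Measurable (fun a : ℕ → ℝ =>
        Real.exp (l * ∑ i : ↥C, if a i.1 ≤ t ∧ a i.1 ≤ y i then (1:ℝ) else 0)) := by
    intro C y
    apply Real.measurable_exp.comp
    apply Measurable.const_mul
    apply Finset.measurable_sum
    intro i _
    exact Measurable.ite
      ((measurableSet_le (measurable_pi_apply i.1) measurable_const).inter
        (measurableSet_le (measurable_pi_apply i.1) measurable_const))
      measurable_const measurable_const
  have hinner_bound : ∀ (C : Finset ℕ) (y : ↥C → ℝ) (a : ℕ → ℝ),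
      |Real.exp (l * ∑ i : ↥C, if a i.1 ≤ t ∧ a i.1 ≤ y i then (1:ℝ) else 0)|
        ≤ Real.exp (|l| * C.card) := by
    intro C y a
    rw [abs_of_pos (Real.exp_pos _)]
    have := exp_mul_sum_ind_le (Finset.univ : Finset ↥C) l
      (fun i => if a i.1 ≤ t ∧ a i.1 ≤ y i then (1:ℝ) else 0)
      (fun i _ => ind_nonneg) (fun i _ => ind_le_one)
    simpa using this
  have hinner_int : ∀ (C : Finset ℕ) (y : ↥C → ℝ),
      Integrable (fun a : ℕ → ℝ =>
        Real.exp (l * ∑ i : ↥C, if a i.1 ≤ t ∧ a i.1 ≤ y i then (1:ℝ) else 0)) νT :=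
    fun C y => integrable_of_bound _ (hinner_meas C y).aestronglyMeasurable _
      (hinner_bound C y)
  -- monotonicity of `fA'`, `fB'`
  have hmono' : ∀ (C : Finset ℕ), (0 ≤ l →
      Monotone (fun y : ↥C → ℝ =>
        ∫ a, Real.exp (l * ∑ i : ↥C, if a i.1 ≤ t ∧ a i.1 ≤ y i then (1:ℝ) else 0) ∂νT))
      ∧ (l ≤ 0 → Antitone (fun y : ↥C → ℝ =>
        ∫ a, Real.exp (l * ∑ i : ↥C, if a i.1 ≤ t ∧ a i.1 ≤ y i then (1:ℝ) else 0) ∂νT)) := by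
    intro C
    have hsum : ∀ (y y' : ↥C → ℝ), y ≤ y' → ∀ a : ℕ → ℝ,
        (∑ i : ↥C, if a i.1 ≤ t ∧ a i.1 ≤ y i then (1:ℝ) else 0)
          ≤ ∑ i : ↥C, if a i.1 ≤ t ∧ a i.1 ≤ y' i then (1:ℝ) else 0 := by
      intro y y' hyy a
      refine Finset.sum_le_sum fun i _ => ind_mono ?_
      rintro ⟨h1, h2⟩
      exact ⟨h1, le_trans h2 (hyy i)⟩
    constructor
    · intro hl y y' hyy
      refine integral_mono (hinner_int C y) (hinner_int C y') fun a => ?_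
      exact Real.exp_le_exp.mpr (mul_le_mul_of_nonneg_left (hsum y y' hyy a) hl)
    · intro hl y y' hyy
      refine integral_mono (hinner_int C y') (hinner_int C y) fun a => ?_
      exact Real.exp_le_exp.mpr (mul_le_mul_of_nonpos_left (hsum y y' hyy a) hl)
  -- integrability over μ for the NA hypothesis on Y
  have hgAYmeas : Measurable (fun ω => gA (Yv ω)) := hgA_meas.measurable.comp hYv
  have hgBYmeas : Measurable (fun ω => gB (Yv ω)) := hgB_meas.measurable.comp hYv
  have heqA' : (fun ω => fA' (fun i : ↥A => M.Y i.1 ω)) = fun ω => gA (Yv ω) :=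
    funext fun ω => hcompA' (Yv ω)
  have heqB' : (fun ω => fB' (fun i : ↥B => M.Y i.1 ω)) = fun ω => gB (Yv ω) :=
    funext fun ω => hcompB' (Yv ω)
  have hintA' : Integrable (fun ω => fA' (fun i : ↥A => M.Y i.1 ω)) μ := by
    rw [heqA']
    exact integrable_of_bound _ hgAYmeas.aestronglyMeasurable _ (fun ω => hg_bound A (Yv ω))
  have hintB' : Integrable (fun ω => fB' (fun i : ↥B => M.Y i.1 ω)) μ := by
    rw [heqB']
    exact integrable_of_bound _ hgBYmeas.aestronglyMeasurable _ (fun ω => hg_bound B (Yv ω))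
  have hintAB' : Integrable
      (fun ω => (fA' (fun i : ↥A => M.Y i.1 ω)) * (fB' (fun i : ↥B => M.Y i.1 ω))) μ := by
    have : (fun ω => (fA' (fun i : ↥A => M.Y i.1 ω)) * (fB' (fun i : ↥B => M.Y i.1 ω)))
        = fun ω => gA (Yv ω) * gB (Yv ω) := by
      funext ω; rw [hcompA' (Yv ω), hcompB' (Yv ω)]
    rw [this]
    exact integrable_of_bound _ (hgAYmeas.mul hgBYmeas).aestronglyMeasurable _
      (fun ω => hgmul_bound (Yv ω))
  have hNAY := M.naY A B hAB fA' fB'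
    (by
      rcases le_total 0 l with hl | hl
      · exact Or.inl ⟨(hmono' A).1 hl, (hmono' B).1 hl⟩
      · exact Or.inr ⟨(hmono' A).2 hl, (hmono' B).2 hl⟩)
    hintA' hintB' hintAB'
  -- put things together
  have eA : ∫ ω, Real.exp (l * ∑ i ∈ A, M.zeta t i ω) ∂μ = ∫ b, gA b ∂νY := by
    have h1 : ∫ ω, Real.exp (l * ∑ i ∈ A, M.zeta t i ω) ∂μ
        = ∫ p, PhiNA t l A p ∂(νT.prod νY) := hconv _ (PhiNA_measurable t l A)
    rw [h1, integral_prod_symm _ (hint_prod A)]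
  have eB : ∫ ω, Real.exp (l * ∑ i ∈ B, M.zeta t i ω) ∂μ = ∫ b, gB b ∂νY := by
    have h1 : ∫ ω, Real.exp (l * ∑ i ∈ B, M.zeta t i ω) ∂μ
        = ∫ p, PhiNA t l B p ∂(νT.prod νY) := hconv _ (PhiNA_measurable t l B)
    rw [h1, integral_prod_symm _ (hint_prod B)]
  have eAB : ∫ ω, Real.exp (l * ∑ i ∈ A, M.zeta t i ω)
        * Real.exp (l * ∑ i ∈ B, M.zeta t i ω) ∂μ
      = ∫ b, (∫ a, PhiNA t l A (a, b) * PhiNA t l B (a, b) ∂νT) ∂νY := by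
    have h1 : ∫ ω, Real.exp (l * ∑ i ∈ A, M.zeta t i ω)
          * Real.exp (l * ∑ i ∈ B, M.zeta t i ω) ∂μ
        = ∫ p, PhiNA t l A p * PhiNA t l B p ∂(νT.prod νY) :=
      hconv (fun p => PhiNA t l A p * PhiNA t l B p) hmul_meas
    rw [h1, integral_prod_symm _ hint_mul]
  -- measurability of the inner-product-integral function of b
  have hinnermul_meas : StronglyMeasurable
      (fun b => ∫ a, PhiNA t l A (a, b) * PhiNA t l B (a, b) ∂νT) :=
    StronglyMeasurable.integral_prod_left' (f := fun p => PhiNA t l A p * PhiNA t l B p)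
      hmul_meas.stronglyMeasurable
  have hinnermul_bound : ∀ b : ℕ → ℝ,
      |∫ a, PhiNA t l A (a, b) * PhiNA t l B (a, b) ∂νT|
        ≤ Real.exp (|l| * A.card) * Real.exp (|l| * B.card) := by
    intro b
    have := norm_integral_le_of_norm_le_const (μ := νT)
      (f := fun a => PhiNA t l A (a, b) * PhiNA t l B (a, b))
      (C := Real.exp (|l| * A.card) * Real.exp (|l| * B.card))
      (ae_of_all _ fun a => by rw [Real.norm_eq_abs]; exact hmul_bound (a, b))
    simpa using this
  have hgABmeas : StronglyMeasurable (fun b => gA b * gB b) := hgA_meas.mul hgB_meas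
  -- the chain of inequalities
  calc ∫ ω, Real.exp (l * ∑ i ∈ A, M.zeta t i ω)
        * Real.exp (l * ∑ i ∈ B, M.zeta t i ω) ∂μ
      = ∫ b, (∫ a, PhiNA t l A (a, b) * PhiNA t l B (a, b) ∂νT) ∂νY := eAB
    _ ≤ ∫ b, gA b * gB b ∂νY := by
        refine integral_mono ?_ ?_ inner
        · exact integrable_of_bound _ hinnermul_meas.aestronglyMeasurable _ hinnermul_bound
        · exact integrable_of_bound _ hgABmeas.aestronglyMeasurable _ hgmul_bound
    _ = ∫ ω, gA (Yv ω) * gB (Yv ω) ∂μ := by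
        rw [hνY, integral_map hYv.aemeasurable hgABmeas.aestronglyMeasurable]
    _ ≤ (∫ ω, gA (Yv ω) ∂μ) * ∫ ω, gB (Yv ω) ∂μ := by
        have h1 : ∫ ω, gA (Yv ω) * gB (Yv ω) ∂μ
            = ∫ ω, (fA' (fun i : ↥A => M.Y i.1 ω)) * (fB' (fun j : ↥B => M.Y j.1 ω)) ∂μ := by
          congr 1
          funext ω
          rw [hcompA' (Yv ω), hcompB' (Yv ω)]
        rw [h1, ← heqA', ← heqB']
        exact hNAY
    _ = (∫ b, gA b ∂νY) * ∫ b, gB b ∂νY := by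
        rw [hνY, integral_map hYv.aemeasurable hgA_meas.aestronglyMeasurable,
          integral_map hYv.aemeasurable hgB_meas.aestronglyMeasurable]
    _ = (∫ ω, Real.exp (l * ∑ i ∈ A, M.zeta t i ω) ∂μ)
        * ∫ ω, Real.exp (l * ∑ i ∈ B, M.zeta t i ω) ∂μ := by rw [eA, eB]


end CensorModel

end Aux3

section Aux4

set_option linter.unusedSectionVars false
set_option maxHeartbeats 1000000

open Real

variable {Ω : Type*} [MeasurableSpace Ω] {μ : Measure Ω} [IsProbabilityMeasure μ]

namespace CensorModel

variable (M : CensorModel Ω μ)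

lemma exp_sum_zeta_meas (t l : ℝ) (s : Finset ℕ) :
    Measurable (fun ω => Real.exp (l * ∑ i ∈ s, M.zeta t i ω)) :=
  Real.measurable_exp.comp ((Finset.measurable_sum s fun i _ =>
    M.zeta_measurable t i).const_mul l)

lemma exp_sum_zeta_bound (t l : ℝ) (s : Finset ℕ) (ω : Ω) :
    |Real.exp (l * ∑ i ∈ s, M.zeta t i ω)| ≤ Real.exp (|l| * s.card) := by
  rw [abs_of_pos (Real.exp_pos _)]
  exact exp_mul_sum_ind_le s l _ (fun i _ => M.zeta_nonneg t i ω)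
    (fun i _ => M.zeta_le_one t i ω)

lemma exp_sum_zeta_int (t l : ℝ) (s : Finset ℕ) :
    Integrable (fun ω => Real.exp (l * ∑ i ∈ s, M.zeta t i ω)) μ :=
  integrable_of_bound _ (M.exp_sum_zeta_meas t l s).aestronglyMeasurable _
    (M.exp_sum_zeta_bound t l s)

lemma mgf_prod (t l : ℝ) (s : Finset ℕ) :
    ∫ ω, Real.exp (l * ∑ i ∈ s, M.zeta t i ω) ∂μ ≤
      ∏ i ∈ s, ∫ ω, Real.exp (l * M.zeta t i ω) ∂μ := by
  classical
  induction s using Finset.induction_on with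
  | empty => simp
  | @insert a s ha ih =>
    have hsplit : ∀ ω, Real.exp (l * ∑ i ∈ insert a s, M.zeta t i ω)
        = Real.exp (l * ∑ i ∈ ({a} : Finset ℕ), M.zeta t i ω)
          * Real.exp (l * ∑ i ∈ s, M.zeta t i ω) := by
      intro ω
      rw [← Real.exp_add, Finset.sum_insert ha, Finset.sum_singleton, mul_add]
    have hdisj : Disjoint ({a} : Finset ℕ) s := Finset.disjoint_singleton_left.mpr ha
    calc ∫ ω, Real.exp (l * ∑ i ∈ insert a s, M.zeta t i ω) ∂μ
        = ∫ ω, Real.exp (l * ∑ i ∈ ({a} : Finset ℕ), M.zeta t i ω)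
            * Real.exp (l * ∑ i ∈ s, M.zeta t i ω) ∂μ := by
          congr 1; funext ω; exact hsplit ω
      _ ≤ (∫ ω, Real.exp (l * ∑ i ∈ ({a} : Finset ℕ), M.zeta t i ω) ∂μ)
            * ∫ ω, Real.exp (l * ∑ i ∈ s, M.zeta t i ω) ∂μ :=
          M.negassoc_exp_split t l hdisj
      _ ≤ (∫ ω, Real.exp (l * ∑ i ∈ ({a} : Finset ℕ), M.zeta t i ω) ∂μ)
            * ∏ i ∈ s, ∫ ω, Real.exp (l * M.zeta t i ω) ∂μ := by
          refine mul_le_mul_of_nonneg_left ih ?_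
          exact integral_nonneg fun ω => (Real.exp_pos _).le
      _ = ∏ i ∈ insert a s, ∫ ω, Real.exp (l * M.zeta t i ω) ∂μ := by
          rw [Finset.prod_insert ha]
          congr 1
          congr 1
          funext ω
          rw [Finset.sum_singleton]

lemma mgf_one (t : ℝ) (k : ℕ) {l : ℝ} (hl : |l| ≤ 1) :
    ∫ ω, Real.exp (l * (M.zeta t k ω - M.Fstar t)) ∂μ ≤ 1 + l ^ 2 := by
  set p := M.Fstar t with hp
  have habs : ∀ ω, |M.zeta t k ω - p| ≤ 1 := by
    intro ω
    have h1 := M.zeta_nonneg t k ω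
    have h2 := M.zeta_le_one t k ω
    have h3 := M.Fstar_nonneg t
    have h4 := M.Fstar_le_one t
    rw [abs_le]; constructor <;> [linarith; linarith]
  have hpt : ∀ ω, Real.exp (l * (M.zeta t k ω - p))
      ≤ 1 + l * (M.zeta t k ω - p) + l ^ 2 := by
    intro ω
    set x := l * (M.zeta t k ω - p) with hx
    have hx1 : |x| ≤ 1 := by
      rw [hx, abs_mul]
      calc |l| * |M.zeta t k ω - p| ≤ 1 * 1 :=
          mul_le_mul hl (habs ω) (abs_nonneg _) zero_le_one
        _ = 1 := by norm_num
    have hexp := Real.abs_exp_sub_one_sub_id_le hx1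
    have hsq : (M.zeta t k ω - p) ^ 2 ≤ 1 := by
      rw [← sq_abs]
      nlinarith [habs ω, abs_nonneg (M.zeta t k ω - p)]
    have hx2 : x ^ 2 ≤ l ^ 2 := by
      rw [hx, mul_pow]
      nlinarith [sq_nonneg l]
    have := (abs_le.mp hexp).2
    linarith
  have hmeas : Measurable (fun ω => M.zeta t k ω - p) :=
    (M.zeta_measurable t k).sub measurable_const
  have hint1 : Integrable (fun ω => Real.exp (l * (M.zeta t k ω - p))) μ := by
    refine integrable_of_bound _ (Real.measurable_exp.comp (hmeas.const_mul l)).aestronglyMeasurable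
      (Real.exp 1) (fun ω => ?_)
    rw [abs_of_pos (Real.exp_pos _), Real.exp_le_exp]
    calc l * (M.zeta t k ω - p) ≤ |l * (M.zeta t k ω - p)| := le_abs_self _
      _ = |l| * |M.zeta t k ω - p| := abs_mul _ _
      _ ≤ 1 * 1 := mul_le_mul hl (habs ω) (abs_nonneg _) zero_le_one
      _ = 1 := by norm_num
  have hint2 : Integrable (fun ω => 1 + l * (M.zeta t k ω - p) + l ^ 2) μ := by
    refine Integrable.add (Integrable.add (integrable_const _) ?_) (integrable_const _)
    refine Integrable.const_mul ?_ l
    exact Integrable.sub (integrable_of_bound _ (M.zeta_measurable t k).aestronglyMeasurable 1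
      (fun ω => by rw [abs_of_nonneg (M.zeta_nonneg t k ω)]; exact M.zeta_le_one t k ω))
      (integrable_const _)
  calc ∫ ω, Real.exp (l * (M.zeta t k ω - p)) ∂μ
      ≤ ∫ ω, (1 + l * (M.zeta t k ω - p) + l ^ 2) ∂μ := integral_mono hint1 hint2 hpt
    _ = 1 + l ^ 2 := by
        have hintz : Integrable (fun ω => M.zeta t k ω) μ :=
          integrable_of_bound _ (M.zeta_measurable t k).aestronglyMeasurable 1
            (fun ω => by rw [abs_of_nonneg (M.zeta_nonneg t k ω)]; exact M.zeta_le_one t k ω)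
        have h1 : Integrable (fun ω => l * (M.zeta t k ω - p)) μ :=
          ((hintz.sub (integrable_const _)).const_mul l)
        have hA : Integrable (fun ω => 1 + l * (M.zeta t k ω - p)) μ :=
          (integrable_const 1).add h1
        rw [integral_add hA (integrable_const _),
          integral_add (integrable_const 1) h1, integral_const_mul,
          integral_sub hintz (integrable_const _), M.zeta_mean t k]
        simp [hp]

lemma mgf_sum (t : ℝ) {l : ℝ} (hl : |l| ≤ 1) (n : ℕ) :
    ∫ ω, Real.exp (l * (∑ i ∈ Finset.range n, M.zeta t i ω - n * M.Fstar t)) ∂μ ≤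
      Real.exp (n * l ^ 2) := by
  set p := M.Fstar t with hp
  have hsplit : ∀ ω, Real.exp (l * (∑ i ∈ Finset.range n, M.zeta t i ω - n * p))
      = Real.exp (-(l * (n * p))) * Real.exp (l * ∑ i ∈ Finset.range n, M.zeta t i ω) := by
    intro ω
    rw [← Real.exp_add]
    congr 1
    ring
  calc ∫ ω, Real.exp (l * (∑ i ∈ Finset.range n, M.zeta t i ω - n * p)) ∂μ
      = Real.exp (-(l * (n * p))) * ∫ ω, Real.exp (l * ∑ i ∈ Finset.range n, M.zeta t i ω) ∂μ := by
        rw [← integral_const_mul]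
        congr 1; funext ω; exact hsplit ω
    _ ≤ Real.exp (-(l * (n * p))) * ∏ i ∈ Finset.range n, ∫ ω, Real.exp (l * M.zeta t i ω) ∂μ := by
        refine mul_le_mul_of_nonneg_left (M.mgf_prod t l (Finset.range n)) (Real.exp_pos _).le
    _ = ∏ i ∈ Finset.range n, (Real.exp (-(l * p)) * ∫ ω, Real.exp (l * M.zeta t i ω) ∂μ) := by
        rw [Finset.prod_mul_distrib, Finset.prod_const]
        congr 1
        rw [← Real.exp_nat_mul, Finset.card_range]
        congr 1
        ring
    _ = ∏ i ∈ Finset.range n, ∫ ω, Real.exp (l * (M.zeta t i ω - p)) ∂μ := by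
        refine Finset.prod_congr rfl fun i _ => ?_
        rw [← integral_const_mul]
        congr 1; funext ω
        rw [← Real.exp_add]
        congr 1
        ring
    _ ≤ ∏ _i ∈ Finset.range n, (1 + l ^ 2) := by
        refine Finset.prod_le_prod (fun i _ => integral_nonneg fun ω => (Real.exp_pos _).le)
          (fun i _ => M.mgf_one t i hl)
    _ = (1 + l ^ 2) ^ n := by rw [Finset.prod_const, Finset.card_range]
    _ ≤ Real.exp (l ^ 2) ^ n := by
        refine pow_le_pow_left₀ (by positivity) ?_ n
        have := Real.add_one_le_exp (l ^ 2)
        linarith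
    _ = Real.exp (n * l ^ 2) := by rw [← Real.exp_nat_mul]

end CensorModel

end Aux4

section Aux5

set_option linter.unusedSectionVars false
set_option maxHeartbeats 1000000

open Real

variable {Ω : Type*} [MeasurableSpace Ω] {μ : Measure Ω} [IsProbabilityMeasure μ]

lemma markov_exp_aux {g : Ω → ℝ} (hmeas : Measurable g) {K : ℝ} (hK : ∀ ω, g ω ≤ K)
    {Emax r : ℝ} (hmgf : ∫ ω, Real.exp (g ω) ∂μ ≤ Emax) :
    (μ {ω | r ≤ g ω}).toReal ≤ Emax / Real.exp r := by
  have hint : Integrable (fun ω => Real.exp (g ω)) μ := by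
    refine Integrable.mono' (integrable_const (Real.exp K))
      (Real.measurable_exp.comp hmeas).aestronglyMeasurable (ae_of_all _ fun ω => ?_)
    rw [Real.norm_eq_abs, abs_of_pos (Real.exp_pos _)]
    exact Real.exp_le_exp.mpr (hK ω)
  have hm := mul_meas_ge_le_integral_of_nonneg
    (ae_of_all μ fun ω => (Real.exp_pos (g ω)).le) hint (Real.exp r)
  have h1 : (μ {ω | r ≤ g ω}).toReal ≤ (μ {ω | Real.exp r ≤ Real.exp (g ω)}).toReal :=
    ENNReal.toReal_mono (measure_ne_top μ _) (measure_mono fun ω h => Real.exp_le_exp.mpr h)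
  have h2 : (μ {ω | Real.exp r ≤ Real.exp (g ω)}).toReal ≤ Emax / Real.exp r := by
    rw [le_div_iff₀ (Real.exp_pos r)]
    calc (μ {ω | Real.exp r ≤ Real.exp (g ω)}).toReal * Real.exp r
        = Real.exp r * (μ {x | Real.exp r ≤ Real.exp (g x)}).toReal := mul_comm _ _
      _ ≤ ∫ ω, Real.exp (g ω) ∂μ := hm
      _ ≤ Emax := hmgf
  exact le_trans h1 h2

namespace CensorModel

variable (M : CensorModel Ω μ)

lemma sum_zeta_meas (t : ℝ) (n : ℕ) :
    Measurable (fun ω => ∑ i ∈ Finset.range n, M.zeta t i ω) :=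
  Finset.measurable_sum _ fun i _ => M.zeta_measurable t i

lemma sum_zeta_mem (t : ℝ) (n : ℕ) (ω : Ω) :
    0 ≤ ∑ i ∈ Finset.range n, M.zeta t i ω ∧ (∑ i ∈ Finset.range n, M.zeta t i ω) ≤ n := by
  constructor
  · exact Finset.sum_nonneg fun i _ => M.zeta_nonneg t i ω
  · calc (∑ i ∈ Finset.range n, M.zeta t i ω) ≤ ∑ _i ∈ Finset.range n, (1:ℝ) :=
        Finset.sum_le_sum fun i _ => M.zeta_le_one t i ω
      _ = n := by simp

lemma side_bound (t : ℝ) (n : ℕ) {l : ℝ} (hl : |l| ≤ 1) (r : ℝ) :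
    (μ {ω | r ≤ l * (∑ i ∈ Finset.range n, M.zeta t i ω - ↑n * M.Fstar t)}).toReal
      ≤ Real.exp (↑n * l ^ 2 - r) := by
  have hp0 := M.Fstar_nonneg t
  have hp1 := M.Fstar_le_one t
  have hgmeas : Measurable
      (fun ω => l * (∑ i ∈ Finset.range n, M.zeta t i ω - ↑n * M.Fstar t)) :=
    ((M.sum_zeta_meas t n).sub measurable_const).const_mul l
  have hgK : ∀ ω, l * (∑ i ∈ Finset.range n, M.zeta t i ω - ↑n * M.Fstar t)
      ≤ |l| * (2 * n) := by
    intro ω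
    have h1 := (M.sum_zeta_mem t n ω).1
    have h2 := (M.sum_zeta_mem t n ω).2
    have habs : |∑ i ∈ Finset.range n, M.zeta t i ω - ↑n * M.Fstar t| ≤ 2 * n := by
      rw [abs_le]
      have hn0 : (0:ℝ) ≤ n := Nat.cast_nonneg n
      constructor
      · nlinarith
      · nlinarith
    calc l * (∑ i ∈ Finset.range n, M.zeta t i ω - ↑n * M.Fstar t)
        ≤ |l * (∑ i ∈ Finset.range n, M.zeta t i ω - ↑n * M.Fstar t)| := le_abs_self _
      _ = |l| * |∑ i ∈ Finset.range n, M.zeta t i ω - ↑n * M.Fstar t| := abs_mul _ _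
      _ ≤ |l| * (2 * n) := mul_le_mul_of_nonneg_left habs (abs_nonneg _)
  have h := markov_exp_aux (μ := μ) hgmeas hgK (r := r) (M.mgf_sum t hl n)
  rw [Real.exp_sub]
  exact h

lemma tail_bound (t : ℝ) {n : ℕ} (hn : 1 ≤ n) {ε : ℝ} (hε : 0 < ε) (hε2 : ε ≤ 2) :
    μ {ω | ε ≤ |M.Fstarn n t ω - M.Fstar t|}
      ≤ ENNReal.ofReal (2 * Real.exp (-(n * ε ^ 2) / 4)) := by
  have hnpos : (0:ℝ) < n := by exact_mod_cast hn
  have hexp_eq : (↑n : ℝ) * (ε/2) ^ 2 - (ε/2) * (↑n * ε) = -(↑n * ε ^ 2) / 4 := by ring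
  have hE1 : (μ {ω | ↑n * ε ≤ ∑ i ∈ Finset.range n, M.zeta t i ω - ↑n * M.Fstar t}).toReal
      ≤ Real.exp (-(↑n * ε ^ 2) / 4) := by
    have hset : {ω | ↑n * ε ≤ ∑ i ∈ Finset.range n, M.zeta t i ω - ↑n * M.Fstar t}
        = {ω | (ε/2) * (↑n * ε)
            ≤ (ε/2) * (∑ i ∈ Finset.range n, M.zeta t i ω - ↑n * M.Fstar t)} := by
      ext ω
      exact (mul_le_mul_iff_right₀ (half_pos hε)).symm
    rw [hset, ← hexp_eq]
    refine M.side_bound t n ?_ _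
    rw [abs_of_pos (half_pos hε)]
    linarith
  have hE2 : (μ {ω | ↑n * ε ≤ -(∑ i ∈ Finset.range n, M.zeta t i ω - ↑n * M.Fstar t)}).toReal
      ≤ Real.exp (-(↑n * ε ^ 2) / 4) := by
    have hset : {ω | ↑n * ε ≤ -(∑ i ∈ Finset.range n, M.zeta t i ω - ↑n * M.Fstar t)}
        = {ω | (ε/2) * (↑n * ε)
            ≤ (-(ε/2)) * (∑ i ∈ Finset.range n, M.zeta t i ω - ↑n * M.Fstar t)} := by
      ext ω
      have h : (-(ε/2)) * (∑ i ∈ Finset.range n, M.zeta t i ω - ↑n * M.Fstar t)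
          = (ε/2) * (-(∑ i ∈ Finset.range n, M.zeta t i ω - ↑n * M.Fstar t)) := by ring
      rw [Set.mem_setOf_eq, Set.mem_setOf_eq, h]
      exact (mul_le_mul_iff_right₀ (half_pos hε)).symm
    have hexp_eq2 : (↑n : ℝ) * (-(ε/2)) ^ 2 - (ε/2) * (↑n * ε) = -(↑n * ε ^ 2) / 4 := by ring
    rw [hset, ← hexp_eq2]
    refine M.side_bound t n ?_ _
    rw [abs_neg, abs_of_pos (half_pos hε)]
    linarith
  have hdiff : ∀ ω, M.Fstarn n t ω - M.Fstar t
      = (↑n : ℝ)⁻¹ * (∑ i ∈ Finset.range n, M.zeta t i ω - ↑n * M.Fstar t) := by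
    intro ω
    rw [M.Fstarn_eq n t ω]
    field_simp
  have hsub : {ω | ε ≤ |M.Fstarn n t ω - M.Fstar t|}
      ⊆ {ω | ↑n * ε ≤ ∑ i ∈ Finset.range n, M.zeta t i ω - ↑n * M.Fstar t}
        ∪ {ω | ↑n * ε ≤ -(∑ i ∈ Finset.range n, M.zeta t i ω - ↑n * M.Fstar t)} := by
    intro ω hω
    rw [Set.mem_setOf_eq, hdiff ω, abs_mul, abs_of_pos (inv_pos.mpr hnpos)] at hω
    have h1 : ↑n * ε ≤ |∑ i ∈ Finset.range n, M.zeta t i ω - ↑n * M.Fstar t| := by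
      rw [← mul_le_mul_iff_right₀ (inv_pos.mpr hnpos), ← mul_assoc, inv_mul_cancel₀ hnpos.ne',
        one_mul]
      exact hω
    rcases le_abs.mp h1 with h | h
    · exact Or.inl h
    · exact Or.inr h
  calc μ {ω | ε ≤ |M.Fstarn n t ω - M.Fstar t|}
      ≤ μ ({ω | ↑n * ε ≤ ∑ i ∈ Finset.range n, M.zeta t i ω - ↑n * M.Fstar t}
          ∪ {ω | ↑n * ε ≤ -(∑ i ∈ Finset.range n, M.zeta t i ω - ↑n * M.Fstar t)}) :=
        measure_mono hsub
    _ ≤ μ {ω | ↑n * ε ≤ ∑ i ∈ Finset.range n, M.zeta t i ω - ↑n * M.Fstar t}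
          + μ {ω | ↑n * ε ≤ -(∑ i ∈ Finset.range n, M.zeta t i ω - ↑n * M.Fstar t)} :=
        measure_union_le _ _
    _ ≤ ENNReal.ofReal (Real.exp (-(↑n * ε ^ 2) / 4))
          + ENNReal.ofReal (Real.exp (-(↑n * ε ^ 2) / 4)) := by
        refine add_le_add ?_ ?_
        · rw [← ENNReal.ofReal_toReal (measure_ne_top μ _)]
          exact ENNReal.ofReal_le_ofReal hE1
        · rw [← ENNReal.ofReal_toReal (measure_ne_top μ _)]
          exact ENNReal.ofReal_le_ofReal hE2
    _ = ENNReal.ofReal (2 * Real.exp (-(↑n * ε ^ 2) / 4)) := by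
        rw [← ENNReal.ofReal_add (Real.exp_pos _).le (Real.exp_pos _).le]
        congr 1
        ring

end CensorModel

end Aux5

section Aux6

set_option linter.unusedSectionVars false
set_option maxHeartbeats 1000000

open Real

variable {Ω : Type*} [MeasurableSpace Ω] {μ : Measure Ω} [IsProbabilityMeasure μ]

namespace CensorModel

variable (M : CensorModel Ω μ)

/-- The adapted grid set `{s ∈ [0,τ] : F_*(0) + j Δ / n ≤ F_*(s)}`. -/
def gridSet (τ : ℝ) (n j : ℕ) : Set ℝ :=
  {s | s ∈ Set.Icc 0 τ ∧ M.Fstar 0 + ↑j * (M.Fstar τ - M.Fstar 0) / ↑n ≤ M.Fstar s}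

/-- The adapted grid point. -/
def gridPt (τ : ℝ) (n j : ℕ) : ℝ := sInf (M.gridSet τ n j)

lemma gridSet_closed (τ : ℝ) (n j : ℕ) : IsClosed (M.gridSet τ n j) :=
  (isClosed_Icc.preimage continuous_id).inter
    (isClosed_le continuous_const M.Fstar_continuous)

lemma gridSet_bddBelow (τ : ℝ) (n j : ℕ) : BddBelow (M.gridSet τ n j) :=
  ⟨0, fun x hx => hx.1.1⟩

lemma gridSet_nonempty (τ : ℝ) (hτ : 0 < τ) {n j : ℕ} (hn : 1 ≤ n) (hj : j ≤ n) :
    (M.gridSet τ n j).Nonempty := by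
  refine ⟨τ, ⟨le_of_lt hτ, le_refl τ⟩, ?_⟩
  have hΔ : 0 ≤ M.Fstar τ - M.Fstar 0 := by
    have := M.Fstar_mono (le_of_lt hτ)
    linarith
  have hnpos : (0:ℝ) < n := by exact_mod_cast hn
  have hjn : (j:ℝ) ≤ n := by exact_mod_cast hj
  have : (j:ℝ) * (M.Fstar τ - M.Fstar 0) / ↑n ≤ M.Fstar τ - M.Fstar 0 := by
    rw [div_le_iff₀ hnpos]
    nlinarith
  linarith

lemma gridPt_mem (τ : ℝ) (hτ : 0 < τ) {n j : ℕ} (hn : 1 ≤ n) (hj : j ≤ n) :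
    M.gridPt τ n j ∈ M.gridSet τ n j :=
  (M.gridSet_closed τ n j).csInf_mem (M.gridSet_nonempty τ hτ hn hj)
    (M.gridSet_bddBelow τ n j)

lemma gridPt_le {τ : ℝ} {n j : ℕ} {x : ℝ} (hx : x ∈ M.gridSet τ n j) :
    M.gridPt τ n j ≤ x :=
  csInf_le (M.gridSet_bddBelow τ n j) hx

lemma gridPt_Fstar_le (τ : ℝ) (hτ : 0 < τ) {n j : ℕ} (hn : 1 ≤ n) (hj : j ≤ n) :
    M.Fstar (M.gridPt τ n j) ≤ M.Fstar 0 + ↑j * (M.Fstar τ - M.Fstar 0) / ↑n := by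
  have hmem := M.gridPt_mem τ hτ hn hj
  set m := M.gridPt τ n j with hm
  have hm0 : 0 ≤ m := hmem.1.1
  have hmτ : m ≤ τ := hmem.1.2
  have hΔ : 0 ≤ M.Fstar τ - M.Fstar 0 := by
    have := M.Fstar_mono (le_of_lt hτ); linarith
  have hjn : 0 ≤ (j:ℝ) * (M.Fstar τ - M.Fstar 0) / ↑n := by positivity
  rcases eq_or_lt_of_le hm0 with h0 | h0
  · rw [← h0]
    linarith
  · -- m > 0: approach from the left
    have htend : Tendsto M.Fstar (nhdsWithin m (Set.Iio m)) (nhds (M.Fstar m)) :=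
      (M.Fstar_continuous.tendsto m).mono_left nhdsWithin_le_nhds
    refine le_of_tendsto htend ?_
    have hIoo : Set.Ioo 0 m ∈ nhdsWithin m (Set.Iio m) := by
      rw [← Set.Iio_inter_Ioi]
      exact Filter.inter_mem self_mem_nhdsWithin
        (mem_nhdsWithin_of_mem_nhds (Ioi_mem_nhds h0))
    filter_upwards [hIoo] with s hs
    by_contra hcon
    push_neg at hcon
    have hsS : s ∈ M.gridSet τ n j :=
      ⟨⟨hs.1.le, le_trans hs.2.le hmτ⟩, hcon.le⟩
    exact absurd (M.gridPt_le hsS) (not_le.mpr hs.2)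

lemma grid_sandwich (τ : ℝ) (hτ : 0 < τ) {n : ℕ} (hn : 1 ≤ n) {t : ℝ}
    (ht : t ∈ Set.Ioo (0:ℝ) τ) :
    ∃ u v : ℝ, (∃ j ≤ n, u = M.gridPt τ n j) ∧ (v = τ ∨ ∃ j ≤ n, v = M.gridPt τ n j)
      ∧ u ≤ t ∧ t ≤ v ∧ M.Fstar v - M.Fstar u ≤ 1 / n := by
  have hnpos : (0:ℝ) < n := by exact_mod_cast hn
  have hΔ0 : 0 ≤ M.Fstar τ - M.Fstar 0 := by
    have := M.Fstar_mono (le_of_lt hτ); linarith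
  have hΔ1 : M.Fstar τ - M.Fstar 0 ≤ 1 := by
    have h1 := M.Fstar_le_one τ
    have h2 := M.Fstar_nonneg 0
    linarith
  have ht0 : M.Fstar 0 ≤ M.Fstar t := M.Fstar_mono ht.1.le
  have htτ : M.Fstar t ≤ M.Fstar τ := M.Fstar_mono ht.2.le
  by_cases hΔ : M.Fstar τ - M.Fstar 0 ≤ 0
  · -- degenerate case: F_* is constant on [0, τ]
    refine ⟨M.gridPt τ n 0, τ, ⟨0, Nat.zero_le n, rfl⟩, Or.inl rfl, ?_, ht.2.le, ?_⟩
    · refine M.gridPt_le ⟨⟨ht.1.le, ht.2.le⟩, ?_⟩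
      simp only [Nat.cast_zero, zero_mul, zero_div, add_zero]
      exact ht0
    · have hmem := M.gridPt_mem τ hτ hn (Nat.zero_le n)
      have := hmem.2
      simp only [Nat.cast_zero, zero_mul, zero_div, add_zero] at this
      have h1n : (0:ℝ) ≤ 1 / n := by positivity
      linarith
  · push_neg at hΔ
    obtain ⟨Δ, hΔdef⟩ : ∃ D : ℝ, D = M.Fstar τ - M.Fstar 0 := ⟨_, rfl⟩
    rw [← hΔdef] at hΔ0 hΔ1
    have hΔ' : 0 < Δ := by rw [hΔdef]; linarith
    obtain ⟨r, hr⟩ : ∃ R : ℝ, R = (M.Fstar t - M.Fstar 0) / Δ := ⟨_, rfl⟩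
    have hr0 : 0 ≤ r := by rw [hr]; exact div_nonneg (by linarith) hΔ'.le
    have hr1 : r ≤ 1 := by
      rw [hr, div_le_one hΔ']
      rw [hΔdef]
      linarith
    have hrΔ : r * Δ = M.Fstar t - M.Fstar 0 := by
      rw [hr]; exact div_mul_cancel₀ _ hΔ'.ne'
    obtain ⟨j, hjdef⟩ : ∃ J : ℕ, J = ⌊(n:ℝ) * r⌋₊ := ⟨_, rfl⟩
    have hjle : (j:ℝ) ≤ (n:ℝ) * r := by
      rw [hjdef]; exact Nat.floor_le (by positivity)
    have hjn : j ≤ n := by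
      have h1 : (n:ℝ) * r ≤ (n:ℝ) := by nlinarith
      have h2 := Nat.floor_le_floor h1
      rw [Nat.floor_natCast] at h2
      rw [hjdef]; exact h2
    have hu_le_t : M.gridPt τ n j ≤ t := by
      refine M.gridPt_le ⟨⟨ht.1.le, ht.2.le⟩, ?_⟩
      have h1 : (j:ℝ) * Δ / n ≤ r * Δ := by
        rw [div_le_iff₀ hnpos]
        nlinarith
      have h2 : (j:ℝ) * Δ / ↑n ≤ M.Fstar t - M.Fstar 0 := by
        rw [← hrΔ]; exact h1
      show M.Fstar 0 + ↑j * (M.Fstar τ - M.Fstar 0) / ↑n ≤ M.Fstar t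
      rw [← hΔdef]
      linarith
    have hu_ge := (M.gridPt_mem τ hτ hn hjn).2
    by_cases hjlt : j < n
    · have hj1n : j + 1 ≤ n := hjlt
      refine ⟨M.gridPt τ n j, M.gridPt τ n (j+1), ⟨j, hjn, rfl⟩,
        Or.inr ⟨j+1, hj1n, rfl⟩, hu_le_t, ?_, ?_⟩
      · -- t ≤ gridPt (j+1)
        refine le_csInf (M.gridSet_nonempty τ hτ hn hj1n) ?_
        intro x hx
        by_contra hcon
        push_neg at hcon
        have hFx : M.Fstar x ≤ M.Fstar t := M.Fstar_mono hcon.le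
        have hnr : (n:ℝ) * r < (j:ℝ) + 1 := by
          rw [hjdef]; exact Nat.lt_floor_add_one _
        have hclt : M.Fstar t < M.Fstar 0 + ((j:ℝ) + 1) * Δ / n := by
          have h3 : r * Δ < ((j:ℝ) + 1) * Δ / n := by
            rw [lt_div_iff₀ hnpos]
            nlinarith
          linarith [hrΔ]
        have hx2 : M.Fstar 0 + (↑(j+1) : ℝ) * (M.Fstar τ - M.Fstar 0) / ↑n ≤ M.Fstar x := hx.2
        rw [← hΔdef] at hx2
        push_cast at hx2
        linarith
      · -- the increment bound
        have hv := M.gridPt_Fstar_le τ hτ hn hj1n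
        rw [← hΔdef] at hv hu_ge
        have hΔn : Δ / ↑n ≤ 1 / ↑n := by gcongr
        have hcast : ((j+1 : ℕ):ℝ) = (j:ℝ) + 1 := by push_cast; ring
        rw [hcast] at hv
        have hexpand : ((j:ℝ) + 1) * Δ / ↑n = (j:ℝ) * Δ / ↑n + Δ / ↑n := by ring
        rw [hexpand] at hv
        linarith
    · -- j = n : take v = τ
      have hjeq : j = n := le_antisymm hjn (not_lt.mp hjlt)
      refine ⟨M.gridPt τ n j, τ, ⟨j, hjn, rfl⟩, Or.inl rfl, hu_le_t, ht.2.le, ?_⟩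
      rw [← hΔdef] at hu_ge
      have hfull : (↑j : ℝ) * Δ / ↑n = Δ := by
        rw [hjeq]
        field_simp
      rw [hfull] at hu_ge
      have h1n : (0:ℝ) ≤ 1 / n := by positivity
      have hFτ : M.Fstar τ = M.Fstar 0 + Δ := by rw [hΔdef]; ring
      linarith

end CensorModel

end Aux6

section Aux7

set_option linter.unusedSectionVars false
set_option maxHeartbeats 1000000

open Real

variable {Ω : Type*} [MeasurableSpace Ω] {μ : Measure Ω} [IsProbabilityMeasure μ]

lemma eps_pos {n : ℕ} (hn : 1024 ≤ n) : 0 < 8 * Real.sqrt (Real.log n / n) := by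
  have h1 : (1:ℝ) < n := by exact_mod_cast lt_of_lt_of_le (by norm_num : (1:ℕ) < 1024) hn
  have hlog : 0 < Real.log n := Real.log_pos h1
  have : 0 < Real.log n / n := div_pos hlog (by linarith)
  positivity

lemma eps_le_two {n : ℕ} (hn : 1024 ≤ n) : 8 * Real.sqrt (Real.log n / n) ≤ 2 := by
  have hn0 : (0:ℝ) < n := by exact_mod_cast lt_of_lt_of_le (by norm_num : (0:ℕ) < 1024) hn
  have hs : (0:ℝ) < Real.sqrt n := Real.sqrt_pos.mpr hn0
  have hlog : Real.log n ≤ 2 * Real.sqrt n := by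
    have h1 : Real.log ((Real.sqrt n)^2) = 2 * Real.log (Real.sqrt n) := by
      rw [Real.log_pow]; norm_num
    rw [Real.sq_sqrt hn0.le] at h1
    have h2 : Real.log (Real.sqrt n) ≤ Real.sqrt n - 1 :=
      Real.log_le_sub_one_of_pos hs
    linarith
  have hsn : (32:ℝ) ≤ Real.sqrt n := by
    rw [show (32:ℝ) = Real.sqrt (32^2) from (Real.sqrt_sq (by norm_num)).symm]
    apply Real.sqrt_le_sqrt
    norm_num
    exact_mod_cast hn
  have hdiv : Real.log n / n ≤ 1 / 16 := by
    have h3 : Real.log n / n ≤ 2 / Real.sqrt n := by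
      rw [div_le_div_iff₀ hn0 hs]
      calc Real.log n * Real.sqrt n ≤ (2 * Real.sqrt n) * Real.sqrt n := by
            apply mul_le_mul_of_nonneg_right hlog hs.le
        _ = 2 * n := by rw [mul_assoc, Real.mul_self_sqrt hn0.le]
    have h4 : 2 / Real.sqrt n ≤ 2 / 32 := by
      apply div_le_div_of_nonneg_left (by norm_num) (by norm_num) hsn
    linarith
  have hsqrt : Real.sqrt (Real.log n / n) ≤ 1 / 4 := by
    rw [show (1:ℝ)/4 = Real.sqrt ((1/4)^2) from (Real.sqrt_sq (by norm_num)).symm]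
    apply Real.sqrt_le_sqrt
    norm_num
    linarith
  linarith

namespace CensorModel

variable (M : CensorModel Ω μ)

/-- The grid point used in the final argument, with the extra point `τ`. -/
def gpt (τ : ℝ) (n j : ℕ) : ℝ := if j = n + 1 then τ else M.gridPt τ n j

/-- The bad event for Borel–Cantelli. -/
def badSet (τ : ℝ) (n : ℕ) : Set Ω :=
  if n < 1024 then ∅ else
    ⋃ j ∈ Finset.range (n+2),
      {ω | 8 * Real.sqrt (Real.log n / n) ≤ |M.Fstarn n (M.gpt τ n j) ω - M.Fstar (M.gpt τ n j)|}

lemma badSet_measure_le (τ : ℝ) (n : ℕ) :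
    μ (M.badSet τ n) ≤ ENNReal.ofReal (6 / (n:ℝ)^2) := by
  rw [badSet]
  split_ifs with h
  · simp
  · push_neg at h
    have hn1 : 1 ≤ n := le_trans (by norm_num) h
    have hn0 : (0:ℝ) < n := by exact_mod_cast lt_of_lt_of_le (by norm_num : (0:ℕ) < 1024) h
    have hn1R : (1:ℝ) ≤ n := by exact_mod_cast hn1
    have hε := eps_pos h
    have hε2 := eps_le_two h
    have hlog : 0 < Real.log n :=
      Real.log_pos (by exact_mod_cast lt_of_lt_of_le (by norm_num : (1:ℕ) < 1024) h)
    -- exponent computation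
    have hexp : -(↑n * (8 * Real.sqrt (Real.log ↑n / ↑n)) ^ 2) / 4 = -(16 * Real.log ↑n) := by
      rw [mul_pow, Real.sq_sqrt (by positivity)]
      field_simp
      ring
    have hpoint : ∀ j ∈ Finset.range (n+2),
        μ {ω | 8 * Real.sqrt (Real.log n / n)
            ≤ |M.Fstarn n (M.gpt τ n j) ω - M.Fstar (M.gpt τ n j)|}
          ≤ ENNReal.ofReal (2 * Real.exp (-(16 * Real.log ↑n))) := by
      intro j _
      have := M.tail_bound (M.gpt τ n j) hn1 hε hε2
      rwa [hexp] at this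
    calc μ (⋃ j ∈ Finset.range (n+2),
          {ω | 8 * Real.sqrt (Real.log n / n)
            ≤ |M.Fstarn n (M.gpt τ n j) ω - M.Fstar (M.gpt τ n j)|})
        ≤ ∑ j ∈ Finset.range (n+2), μ {ω | 8 * Real.sqrt (Real.log n / n)
            ≤ |M.Fstarn n (M.gpt τ n j) ω - M.Fstar (M.gpt τ n j)|} :=
          measure_biUnion_finset_le _ _
      _ ≤ ∑ _j ∈ Finset.range (n+2), ENNReal.ofReal (2 * Real.exp (-(16 * Real.log ↑n))) :=
          Finset.sum_le_sum hpoint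
      _ = ((n+2 : ℕ) : ENNReal) * ENNReal.ofReal (2 * Real.exp (-(16 * Real.log ↑n))) := by
          rw [Finset.sum_const, Finset.card_range, nsmul_eq_mul]
      _ = ENNReal.ofReal ((↑(n+2) : ℝ) * (2 * Real.exp (-(16 * Real.log ↑n)))) := by
          rw [← ENNReal.ofReal_natCast (n+2),
            ← ENNReal.ofReal_mul (by positivity : (0:ℝ) ≤ ((n+2:ℕ):ℝ))]
      _ ≤ ENNReal.ofReal (6 / (n:ℝ)^2) := by
          apply ENNReal.ofReal_le_ofReal
          have hexp3 : Real.exp (-(16 * Real.log ↑n)) ≤ ((n:ℝ)^3)⁻¹ := by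
            rw [Real.exp_neg]
            apply inv_anti₀ (by positivity)
            calc ((n:ℝ))^3 ≤ ((n:ℝ))^16 := pow_le_pow_right₀ hn1R (by norm_num)
              _ = Real.exp (16 * Real.log ↑n) := by
                  rw [show (16:ℝ) * Real.log ↑n = ↑(16:ℕ) * Real.log ↑n by norm_num,
                    Real.exp_nat_mul, Real.exp_log hn0]
          have hcard : ((n+2 : ℕ):ℝ) ≤ 3 * n := by push_cast; linarith
          have hepos : 0 ≤ Real.exp (-(16 * Real.log ↑n)) := (Real.exp_pos _).le
          calc ((n+2 : ℕ):ℝ) * (2 * Real.exp (-(16 * Real.log ↑n)))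
              ≤ (3 * (n:ℝ)) * (2 * ((n:ℝ)^3)⁻¹) := by
                apply mul_le_mul hcard (by linarith) (by linarith) (by positivity)
            _ = 6 / (n:ℝ)^2 := by
                field_simp
                ring

lemma badSet_tsum_ne_top (τ : ℝ) : (∑' n, μ (M.badSet τ n)) ≠ ⊤ := by
  have hsummable : Summable (fun n : ℕ => 6 / (n:ℝ)^2) := by
    have := Real.summable_one_div_nat_pow.mpr (le_refl 2)
    have h6 := this.mul_left 6
    refine h6.congr fun n => ?_
    rw [mul_one_div]
  have hle : (∑' n, μ (M.badSet τ n)) ≤ ∑' n : ℕ, ENNReal.ofReal (6 / (n:ℝ)^2) :=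
    ENNReal.tsum_le_tsum fun n => M.badSet_measure_le τ n
  have heq : (∑' n : ℕ, ENNReal.ofReal (6 / (n:ℝ)^2))
      = ENNReal.ofReal (∑' n : ℕ, 6 / (n:ℝ)^2) :=
    (ENNReal.ofReal_tsum_of_nonneg (fun n => by positivity) hsummable).symm
  rw [heq] at hle
  exact ne_top_of_le_ne_top ENNReal.ofReal_ne_top hle

end CensorModel

end Aux7

set_option maxHeartbeats 1000000 in
/-- Under the censoring NA model, for any `0 < τ < τ_L`,
`sup_{0 < t < τ} |F_{*n}(t) − F_*(t)| = O((n⁻¹ ln n)^{1/2})` almost surely. -/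
theorem empirical_subdistribution_strong_rate
    {Ω : Type*} [MeasurableSpace Ω] {μ : Measure Ω} [IsProbabilityMeasure μ]
    (M : CensorModel Ω μ) (τ : ℝ) (hτ0 : 0 < τ) (hτL : τ < M.tauL) :
    ∀ᵐ ω ∂μ, ∃ C : ℝ, ∀ᶠ n : ℕ in atTop, ∀ t ∈ Set.Ioo (0 : ℝ) τ,
      |M.Fstarn n t ω - M.Fstar t| ≤ C * Real.sqrt (Real.log n / n) := by
  have hbc := MeasureTheory.ae_eventually_notMem (M.badSet_tsum_ne_top τ)
  filter_upwards [hbc] with ω hω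
  refine ⟨9, ?_⟩
  filter_upwards [hω, eventually_ge_atTop 1024] with n hnbad hn1024
  intro t ht
  have hn1 : 1 ≤ n := le_trans (by norm_num) hn1024
  have hnR : (1:ℝ) ≤ n := by exact_mod_cast hn1
  have hn0 : (0:ℝ) < n := by linarith
  have hεpos := eps_pos hn1024
  have hsq0 : 0 < Real.sqrt (Real.log n / n) := by linarith
  -- 1/n ≤ sqrt (log n / n)
  have hlog1 : 1 ≤ Real.log n := by
    rw [Real.le_log_iff_exp_le hn0]
    calc Real.exp 1 ≤ 3 := le_of_lt (lt_trans Real.exp_one_lt_d9 (by norm_num))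
      _ ≤ n := by exact_mod_cast le_trans (by norm_num : (3:ℕ) ≤ 1024) hn1024
  have hinv : 1/(n:ℝ) ≤ Real.sqrt (Real.log n / n) := by
    rw [show (1:ℝ)/n = Real.sqrt ((1/n)^2) from (Real.sqrt_sq (by positivity)).symm]
    apply Real.sqrt_le_sqrt
    have e1 : Real.log ↑n / ↑n = Real.log ↑n * (1/↑n) := by ring
    have e2 : ((1:ℝ)/n)^2 = (1/n) * (1/n) := sq _
    rw [e1, e2]
    have h1n : (1:ℝ)/n ≤ 1 := by rw [div_le_one hn0]; exact hnR
    apply mul_le_mul_of_nonneg_right (le_trans h1n hlog1) (by positivity)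
  -- not in the bad set implies good bounds at every grid point
  have hnot : ∀ j ∈ Finset.range (n+2),
      |M.Fstarn n (M.gpt τ n j) ω - M.Fstar (M.gpt τ n j)|
        < 8 * Real.sqrt (Real.log n / n) := by
    intro j hj
    by_contra hcon
    push_neg at hcon
    apply hnbad
    rw [CensorModel.badSet, if_neg (by omega : ¬ n < 1024)]
    exact Set.mem_biUnion hj hcon
  obtain ⟨u, v, ⟨ju, hju, hueq⟩, hvor, hut, htv, huv⟩ := M.grid_sandwich τ hτ0 hn1 ht
  have hu_bound : |M.Fstarn n u ω - M.Fstar u| < 8 * Real.sqrt (Real.log n / n) := by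
    have hju2 : ju ∈ Finset.range (n+2) := Finset.mem_range.mpr (by omega)
    have hgpt : M.gpt τ n ju = u := by
      rw [CensorModel.gpt, if_neg (by omega : ¬ ju = n + 1), hueq]
    rw [← hgpt]
    exact hnot ju hju2
  have hv_bound : |M.Fstarn n v ω - M.Fstar v| < 8 * Real.sqrt (Real.log n / n) := by
    rcases hvor with rfl | ⟨jv, hjv, hveq⟩
    · have hgpt : M.gpt v n (n+1) = v := by rw [CensorModel.gpt, if_pos rfl]
      have hmem : (n+1) ∈ Finset.range (n+2) := Finset.mem_range.mpr (by omega)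
      rw [← hgpt]
      exact hnot (n+1) hmem
    · have hmem : jv ∈ Finset.range (n+2) := Finset.mem_range.mpr (by omega)
      have hgpt : M.gpt τ n jv = v := by
        rw [CensorModel.gpt, if_neg (by omega : ¬ jv = n + 1), hveq]
      rw [← hgpt]
      exact hnot jv hmem
  have h1 : M.Fstarn n t ω ≤ M.Fstarn n v ω := M.Fstarn_mono n ω htv
  have h2 : M.Fstarn n u ω ≤ M.Fstarn n t ω := M.Fstarn_mono n ω hut
  have h3 : M.Fstar u ≤ M.Fstar t := M.Fstar_mono hut
  have h4 : M.Fstar t ≤ M.Fstar v := M.Fstar_mono htv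
  have habs_u := abs_lt.mp hu_bound
  have habs_v := abs_lt.mp hv_bound
  rw [abs_le]
  constructor
  · have := habs_u.1
    nlinarith [habs_u.1, h2, huv, h4, hinv]
  · nlinarith [habs_v.2, h1, huv, h3, hinv]
end
end

section
/- Let T and Y be independent nonnegative random variables where T has a continuous distribution function F with density f and Y has distribution function G. Set X = min(T, Y), let L be the distribution function of X, L̄ = 1−L, and F_*(t) = P(T ≤ t, T ≤ Y). Then for every x with F(x) < 1 and G(x) < 1, ∫_0^x dF_*(s)/L̄(s) = ∫_0^x f(s)/(1 − F(s)) ds, i.e. the cumulative hazard function H(x) = ∫_0^x h(s) ds with hazard h = f/(1−F) admits the representation H(x) = ∫_0^x dF_*(s)/L̄(s). -/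
open MeasureTheory ProbabilityTheory Filter Set
open scoped ENNReal

/-- Let `T` and `Y` be independent nonnegative random variables, where `T`
has a (continuous) distribution function with density `f` and `Y` has distribution function
`G`.  With `X = min (T, Y)`, `L` the distribution function of `X`, `L̄ = 1 − L` and
`F_*(t) = P(T ≤ t, T ≤ Y)`, for every `x` with `F(x) < 1` and `G(x) < 1` the cumulative
hazard function admits the representation
`H(x) = ∫_0^x dF_*(s)/L̄(s) = ∫_0^x f(s)/(1 − F(s)) ds`. -/
theorem cumulative_hazard_representation
    {Ω : Type*} [MeasurableSpace Ω] {μ : Measure Ω} [IsProbabilityMeasure μ]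
    (T Y : Ω → ℝ) (hT : Measurable T) (hY : Measurable Y)
    (hT0 : ∀ ω, 0 ≤ T ω) (hY0 : ∀ ω, 0 ≤ Y ω)
    (hInd : IndepFun T Y μ)
    (f : ℝ → ℝ) (hf : Measurable f) (hf0 : ∀ s, 0 ≤ f s)
    (hdens : Measure.map T μ = volume.withDensity fun s => ENNReal.ofReal (f s)) :
    ∀ x : ℝ, (μ {ω | T ω ≤ x}).toReal < 1 → (μ {ω | Y ω ≤ x}).toReal < 1 →
      (∫ s in Set.Ioc (0 : ℝ) x, (1 - (μ {ω | min (T ω) (Y ω) ≤ s}).toReal)⁻¹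
          ∂(Measure.map (fun ω => min (T ω) (Y ω)) (μ.restrict {ω | T ω ≤ Y ω}))) =
        ∫ s in Set.Ioc (0 : ℝ) x, f s / (1 - (μ {ω | T ω ≤ s}).toReal) := by
  intro x hFx hGx
  have hmin : Measurable fun ω => min (T ω) (Y ω) := hT.min hY
  have hSm : MeasurableSet {ω | T ω ≤ Y ω} := measurableSet_le hT hY
  -- the survival function of Y, measurable
  have hGm : Measurable fun t : ℝ => μ {ω | t ≤ Y ω} :=
    Antitone.measurable (fun s t hst => measure_mono fun ω h => le_trans hst h)
  -- the density of the measure ρ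
  set ρ : ℝ → ℝ≥0∞ := fun t => ENNReal.ofReal (f t) * μ {ω | t ≤ Y ω} with hρ
  have hρm : Measurable ρ := hf.ennreal_ofReal.mul hGm
  -- joint law is the product
  have hmap : μ.map (fun ω => (T ω, Y ω)) = (μ.map T).prod (μ.map Y) :=
    (indepFun_iff_map_prod_eq_prod_map_map hT.aemeasurable hY.aemeasurable).mp hInd
  -- the sub-distribution measure is `volume.withDensity ρ`
  have hν : Measure.map (fun ω => min (T ω) (Y ω)) (μ.restrict {ω | T ω ≤ Y ω})
      = volume.withDensity ρ := by
    ext A hA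
    have hAs : MeasurableSet {p : ℝ × ℝ | p.1 ∈ A ∧ p.1 ≤ p.2} :=
      (measurable_fst hA).inter (measurableSet_le measurable_fst measurable_snd)
    rw [Measure.map_apply hmin hA, Measure.restrict_apply (hmin hA)]
    have h1 : (fun ω => min (T ω) (Y ω)) ⁻¹' A ∩ {ω | T ω ≤ Y ω}
        = (fun ω => (T ω, Y ω)) ⁻¹' {p : ℝ × ℝ | p.1 ∈ A ∧ p.1 ≤ p.2} := by
      ext ω
      simp only [mem_inter_iff, mem_preimage, mem_setOf_eq]
      constructor
      · rintro ⟨hmem, hle⟩; rw [min_eq_left hle] at hmem; exact ⟨hmem, hle⟩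
      · rintro ⟨hmem, hle⟩; exact ⟨by rw [min_eq_left hle]; exact hmem, hle⟩
    rw [h1, ← Measure.map_apply (hT.prodMk hY) hAs, hmap, Measure.prod_apply hAs]
    have h2 : ∀ t, (μ.map Y) (Prod.mk t ⁻¹' {p : ℝ × ℝ | p.1 ∈ A ∧ p.1 ≤ p.2})
        = A.indicator (fun t => μ {ω | t ≤ Y ω}) t := by
      intro t
      by_cases ht : t ∈ A
      · rw [indicator_of_mem ht]
        have : Prod.mk t ⁻¹' {p : ℝ × ℝ | p.1 ∈ A ∧ p.1 ≤ p.2} = Ici t := by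
          ext y; simp [ht, mem_Ici]
        rw [this, Measure.map_apply hY measurableSet_Ici]
        rfl
      · rw [indicator_of_notMem ht]
        have : Prod.mk t ⁻¹' {p : ℝ × ℝ | p.1 ∈ A ∧ p.1 ≤ p.2} = ∅ := by
          ext y; simp [ht]
        rw [this, measure_empty]
    rw [lintegral_congr h2, lintegral_indicator hA, hdens, withDensity_apply _ hA,
      setLIntegral_withDensity_eq_setLIntegral_mul _ hf.ennreal_ofReal hGm hA]
    rfl
  -- complement identities
  have hTcompl : ∀ s : ℝ, μ {ω | s < T ω} = 1 - μ {ω | T ω ≤ s} := by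
    intro s
    have : {ω | s < T ω} = {ω | T ω ≤ s}ᶜ := by ext ω; simp [not_le]
    rw [this, measure_compl (measurableSet_le hT measurable_const) (measure_ne_top μ _),
      measure_univ]
  have hYcompl : ∀ s : ℝ, μ {ω | s < Y ω} = 1 - μ {ω | Y ω ≤ s} := by
    intro s
    have : {ω | s < Y ω} = {ω | Y ω ≤ s}ᶜ := by ext ω; simp [not_le]
    rw [this, measure_compl (measurableSet_le hY measurable_const) (measure_ne_top μ _),
      measure_univ]
  -- survival product formula
  have hprod : ∀ s : ℝ,
      1 - (μ {ω | min (T ω) (Y ω) ≤ s}).toReal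
        = (μ {ω | s < T ω}).toReal * (μ {ω | s < Y ω}).toReal := by
    intro s
    have hc : {ω | min (T ω) (Y ω) ≤ s}ᶜ = T ⁻¹' Ioi s ∩ Y ⁻¹' Ioi s := by
      ext ω; simp [min_le_iff, not_or, not_le, and_comm]
    have hind := hInd.measure_inter_preimage_eq_mul (Ioi s) (Ioi s)
      measurableSet_Ioi measurableSet_Ioi
    have h1 : μ {ω | min (T ω) (Y ω) ≤ s}
        = 1 - μ (T ⁻¹' Ioi s) * μ (Y ⁻¹' Ioi s) := by
      rw [← hind, ← hc, measure_compl (measurableSet_le hmin measurable_const)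
        (measure_ne_top μ _), measure_univ]
      exact (ENNReal.sub_sub_cancel ENNReal.one_ne_top prob_le_one).symm
    have hle1 : μ (T ⁻¹' Ioi s) * μ (Y ⁻¹' Ioi s) ≤ 1 := by
      calc μ (T ⁻¹' Ioi s) * μ (Y ⁻¹' Ioi s) ≤ 1 * 1 :=
            mul_le_mul' prob_le_one prob_le_one
        _ = 1 := one_mul 1
    rw [h1, ENNReal.toReal_sub_of_le hle1 ENNReal.one_ne_top, ENNReal.toReal_one,
      ENNReal.toReal_mul]
    have hab : (μ (T ⁻¹' Ioi s)).toReal = (μ {ω | s < T ω}).toReal := rfl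
    have hab2 : (μ (Y ⁻¹' Ioi s)).toReal = (μ {ω | s < Y ω}).toReal := rfl
    rw [hab, hab2]
    ring
  -- positivity on (0, x]
  have hTpos : ∀ s ∈ Set.Ioc (0:ℝ) x, 0 < (μ {ω | s < T ω}).toReal := by
    intro s hs
    rw [hTcompl s]
    have h1 : μ {ω | T ω ≤ s} ≤ μ {ω | T ω ≤ x} :=
      measure_mono fun ω h => le_trans h hs.2
    have h2 : μ {ω | T ω ≤ x} < 1 := by
      by_contra hcon
      push_neg at hcon
      have := le_antisymm (prob_le_one) hcon
      rw [this] at hFx; simp at hFx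
    have hlt : μ {ω | T ω ≤ s} < 1 := lt_of_le_of_lt h1 h2
    rw [ENNReal.toReal_pos_iff]
    constructor
    · exact tsub_pos_of_lt hlt
    · exact lt_of_le_of_lt (tsub_le_self) ENNReal.one_lt_top
  have hYpos : ∀ s ∈ Set.Ioc (0:ℝ) x, 0 < (μ {ω | s < Y ω}).toReal := by
    intro s hs
    rw [hYcompl s]
    have h1 : μ {ω | Y ω ≤ s} ≤ μ {ω | Y ω ≤ x} :=
      measure_mono fun ω h => le_trans h hs.2
    have h2 : μ {ω | Y ω ≤ x} < 1 := by
      by_contra hcon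
      push_neg at hcon
      have := le_antisymm (prob_le_one) hcon
      rw [this] at hGx; simp at hGx
    have hlt : μ {ω | Y ω ≤ s} < 1 := lt_of_le_of_lt h1 h2
    rw [ENNReal.toReal_pos_iff]
    constructor
    · exact tsub_pos_of_lt hlt
    · exact lt_of_le_of_lt (tsub_le_self) ENNReal.one_lt_top
  -- 1 - F(s)
  have hFsub : ∀ s : ℝ, 1 - (μ {ω | T ω ≤ s}).toReal = (μ {ω | s < T ω}).toReal := by
    intro s
    rw [hTcompl s, ENNReal.toReal_sub_of_le prob_le_one ENNReal.one_ne_top, ENNReal.toReal_one]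
  -- measurability of integrands
  have hLm : Measurable fun s : ℝ => (1 - (μ {ω | min (T ω) (Y ω) ≤ s}).toReal)⁻¹ := by
    have : Measurable fun s : ℝ => μ {ω | min (T ω) (Y ω) ≤ s} :=
      Monotone.measurable (fun s t hst => measure_mono fun ω h => le_trans h hst)
    exact ((measurable_const.sub this.ennreal_toReal)).inv
  have hFm : Measurable fun s : ℝ => f s / (1 - (μ {ω | T ω ≤ s}).toReal) := by
    have : Measurable fun s : ℝ => μ {ω | T ω ≤ s} :=
      Monotone.measurable (fun s t hst => measure_mono fun ω h => le_trans h hst)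
    exact hf.div (measurable_const.sub this.ennreal_toReal)
  -- convert both sides to lintegrals
  have hLnonneg : ∀ s : ℝ, 0 ≤ (1 - (μ {ω | min (T ω) (Y ω) ≤ s}).toReal)⁻¹ := by
    intro s
    apply inv_nonneg.2
    have : (μ {ω | min (T ω) (Y ω) ≤ s}).toReal ≤ 1 := by
      rw [← ENNReal.toReal_one]
      exact ENNReal.toReal_mono ENNReal.one_ne_top prob_le_one
    linarith
  have hFnonneg : ∀ s : ℝ, 0 ≤ f s / (1 - (μ {ω | T ω ≤ s}).toReal) := by
    intro s
    rw [hFsub s]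
    exact div_nonneg (hf0 s) ENNReal.toReal_nonneg
  rw [integral_eq_lintegral_of_nonneg_ae (Filter.Eventually.of_forall fun s => hLnonneg s)
      hLm.aestronglyMeasurable,
    integral_eq_lintegral_of_nonneg_ae (Filter.Eventually.of_forall fun s => hFnonneg s)
      hFm.aestronglyMeasurable]
  congr 1
  rw [hν, setLIntegral_withDensity_eq_setLIntegral_mul _ hρm hLm.ennreal_ofReal
    measurableSet_Ioc]
  -- a.e. equality of the integrands on (0, x]
  have hcnt : {s : ℝ | μ {ω | s ≤ Y ω} ≠ μ {ω | s < Y ω}}.Countable :=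
    countable_meas_le_ne_meas_lt μ Y
  have hae : ∀ᵐ s : ℝ, μ {ω | s ≤ Y ω} = μ {ω | s < Y ω}  := by
    have := Set.Countable.measure_zero hcnt volume
    rw [ae_iff]
    convert this using 2
  apply setLIntegral_congr_fun_ae measurableSet_Ioc
  filter_upwards [hae] with s hYs hs
  have ha := hTpos s hs
  have hb := hYpos s hs
  have hbY : μ {ω | s < Y ω} = ENNReal.ofReal (μ {ω | s < Y ω}).toReal :=
    (ENNReal.ofReal_toReal (measure_ne_top μ _)).symm
  simp only [Pi.mul_apply, hρ]
  rw [hYs, hprod s, hbY]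
  rw [← ENNReal.ofReal_mul (hf0 s),
    ← ENNReal.ofReal_mul (mul_nonneg (hf0 s) ENNReal.toReal_nonneg)]
  congr 1
  rw [hFsub s]
  field_simp
  rw [ENNReal.toReal_ofReal ENNReal.toReal_nonneg, mul_div_cancel_right₀ _ hb.ne']
end
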